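/- arXiv:0710.5014 — 8 statements merged into one kernel-verified Lean document; each statement's English description precedes it below -/
import Mathlib

section
/- Fix an integer k ≥ 3 and an integer n ≥ 1. The map ϑ sending a set A of arcs to {(i, j−1) : (i, j) ∈ A} is a well-defined bijection from the set of k-noncrossing partition diagrams on [n] onto the set of k-noncrossing braid diagrams on [n−1]. In particular, for every k-noncrossing partition diagram A on [n] and all i < j, (i, j) ∈ A if and only if (i, j−1) ∈ ϑ(A). -/
/-- A partition diagram on `[n] = {1,…,n}`: a set of arcs `(i,j)` with `1 ≤ i < j ≤ n`
such that every vertex is the left endpoint of at most one arc and the right endpoint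
of at most one arc. -/
def IsPartitionDiagram (n : ℕ) (A : Finset (ℕ × ℕ)) : Prop :=
  (∀ p ∈ A, 1 ≤ p.1 ∧ p.1 < p.2 ∧ p.2 ≤ n) ∧
  (∀ p ∈ A, ∀ q ∈ A, p.1 = q.1 → p = q) ∧
  (∀ p ∈ A, ∀ q ∈ A, p.2 = q.2 → p = q)

/-- A braid diagram on `[n]`: a set of pairs `(i,j)` with `1 ≤ i ≤ j ≤ n`
such that every vertex is the first coordinate of at most one element and the second
coordinate of at most one element. -/
def IsBraidDiagram (n : ℕ) (B : Finset (ℕ × ℕ)) : Prop :=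
  (∀ p ∈ B, 1 ≤ p.1 ∧ p.1 ≤ p.2 ∧ p.2 ≤ n) ∧
  (∀ p ∈ B, ∀ q ∈ B, p.1 = q.1 → p = q) ∧
  (∀ p ∈ B, ∀ q ∈ B, p.2 = q.2 → p = q)

/-- `A` contains `k` arcs `(i₁,j₁),…,(i_k,j_k)` with `i₁<⋯<i_k<j₁<⋯<j_k`. -/
def HasKCrossing (k : ℕ) (A : Finset (ℕ × ℕ)) : Prop :=
  ∃ f : Fin k → ℕ × ℕ, (∀ s, f s ∈ A) ∧
    StrictMono (fun s => (f s).1) ∧ StrictMono (fun s => (f s).2) ∧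
    ∀ s t : Fin k, (f s).1 < (f t).2

/-- `A` contains `k` elements `(i₁,j₁),…,(i_k,j_k)` with `i₁<⋯<i_k ≤ j₁<⋯<j_k`. -/
def HasEnhancedKCrossing (k : ℕ) (A : Finset (ℕ × ℕ)) : Prop :=
  ∃ f : Fin k → ℕ × ℕ, (∀ s, f s ∈ A) ∧
    StrictMono (fun s => (f s).1) ∧ StrictMono (fun s => (f s).2) ∧
    ∀ s t : Fin k, (f s).1 ≤ (f t).2

/-- The map `ϑ` sending a set of arcs `A` to `{(i, j-1) : (i,j) ∈ A}`. -/
def vartheta (A : Finset (ℕ × ℕ)) : Finset (ℕ × ℕ) :=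
  A.image (fun p => (p.1, p.2 - 1))

lemma two_le_snd {n : ℕ} {A : Finset (ℕ × ℕ)} (hA : IsPartitionDiagram n A)
    {p : ℕ × ℕ} (hp : p ∈ A) : 2 ≤ p.2 := by
  have := hA.1 p hp; omega

lemma cross_to_enhanced {k : ℕ} {A : Finset (ℕ × ℕ)}
    (h : ∀ p ∈ A, 1 ≤ p.1 ∧ p.1 < p.2) :
    HasKCrossing k A → HasEnhancedKCrossing k (vartheta A) := by
  rintro ⟨f, hf, h1, h2, h3⟩
  refine ⟨fun s => ((f s).1, (f s).2 - 1), fun s => ?_, h1, ?_, ?_⟩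
  · exact Finset.mem_image.mpr ⟨f s, hf s, rfl⟩
  · intro a b hab
    have ha := h (f a) (hf a); have hb := h (f b) (hf b)
    have h2' : (f a).2 < (f b).2 := h2 hab
    show (f a).2 - 1 < (f b).2 - 1
    omega
  · intro s t
    have ht := h (f t) (hf t)
    have h3' : (f s).1 < (f t).2 := h3 s t
    show (f s).1 ≤ (f t).2 - 1
    omega

lemma enhanced_to_cross {k : ℕ} {A : Finset (ℕ × ℕ)}
    (h : ∀ p ∈ A, 2 ≤ p.2) :
    HasEnhancedKCrossing k (vartheta A) → HasKCrossing k A := by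
  rintro ⟨f, hf, h1, h2, h3⟩
  have hex : ∀ s, ∃ q ∈ A, (q.1, q.2 - 1) = f s := by
    intro s; exact Finset.mem_image.mp (hf s)
  choose g hg hgf using hex
  have hfst : ∀ s, (g s).1 = (f s).1 := fun s => (Prod.ext_iff.mp (hgf s)).1
  have hsnd : ∀ s, (g s).2 - 1 = (f s).2 := fun s => (Prod.ext_iff.mp (hgf s)).2
  have h2g : ∀ s, 2 ≤ (g s).2 := fun s => h (g s) (hg s)
  refine ⟨g, hg, ?_, ?_, ?_⟩
  · intro a b hab
    have h1' : (f a).1 < (f b).1 := h1 hab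
    have := hfst a; have := hfst b
    show (g a).1 < (g b).1; omega
  · intro a b hab
    have h2' : (f a).2 < (f b).2 := h2 hab
    have := hsnd a; have := hsnd b; have := h2g a; have := h2g b
    show (g a).2 < (g b).2; omega
  · intro s t
    have h3' : (f s).1 ≤ (f t).2 := h3 s t
    have := hfst s; have := hsnd t; have := h2g t
    omega

lemma vartheta_subset {A A' : Finset (ℕ × ℕ)}
    (hA : ∀ p ∈ A, 2 ≤ p.2) (hA' : ∀ p ∈ A', 2 ≤ p.2)
    (h : vartheta A = vartheta A') : A ⊆ A' := by
  intro p hp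
  have hm : (p.1, p.2 - 1) ∈ vartheta A' := by
    rw [← h]; exact Finset.mem_image.mpr ⟨p, hp, rfl⟩
  obtain ⟨q, hq, hqe⟩ := Finset.mem_image.mp hm
  have h1 : q.1 = p.1 := (Prod.ext_iff.mp hqe).1
  have h2 : q.2 - 1 = p.2 - 1 := (Prod.ext_iff.mp hqe).2
  have := hA p hp; have := hA' q hq
  have heq : q = p := Prod.ext h1 (by omega)
  rwa [← heq]

lemma mem_iff_vartheta {A : Finset (ℕ × ℕ)} (hA : ∀ p ∈ A, 2 ≤ p.2)
    {i j : ℕ} (hij : 1 ≤ j) : ((i, j) ∈ A ↔ (i, j - 1) ∈ vartheta A) := by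
  constructor
  · intro h; exact Finset.mem_image.mpr ⟨(i, j), h, rfl⟩
  · intro h
    obtain ⟨q, hq, hqe⟩ := Finset.mem_image.mp h
    have h1 : q.1 = i := (Prod.ext_iff.mp hqe).1
    have h2 : q.2 - 1 = j - 1 := (Prod.ext_iff.mp hqe).2
    have := hA q hq
    have heq : q = (i, j) := Prod.ext h1 (by simp only; omega)
    rwa [← heq]

/-- `ϑ` is a well-defined bijection from the `k`-noncrossing partition diagrams on `[n]`
onto the `k`-noncrossing braid diagrams on `[n-1]`, and for every `k`-noncrossing
partition diagram `A` on `[n]` and all `i < j`, `(i,j) ∈ A ↔ (i,j-1) ∈ ϑ(A)`. -/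
theorem vartheta_bijOn_partitions_braids (k n : ℕ) (hk : 3 ≤ k) (hn : 1 ≤ n) :
    Set.BijOn vartheta
      {A : Finset (ℕ × ℕ) | IsPartitionDiagram n A ∧ ¬ HasKCrossing k A}
      {B : Finset (ℕ × ℕ) | IsBraidDiagram (n - 1) B ∧ ¬ HasEnhancedKCrossing k B} ∧
    ∀ A : Finset (ℕ × ℕ), IsPartitionDiagram n A → ¬ HasKCrossing k A →
      ∀ i j : ℕ, i < j → ((i, j) ∈ A ↔ (i, j - 1) ∈ vartheta A) := by
  constructor
  · refine ⟨?_, ?_, ?_⟩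
    · -- maps to
      rintro A ⟨hA, hnc⟩
      refine ⟨⟨?_, ?_, ?_⟩, ?_⟩
      · rintro p hp
        obtain ⟨q, hq, rfl⟩ := Finset.mem_image.mp hp
        have := hA.1 q hq; simp only; omega
      · rintro p hp q hq h
        obtain ⟨p', hp', rfl⟩ := Finset.mem_image.mp hp
        obtain ⟨q', hq', rfl⟩ := Finset.mem_image.mp hq
        simp only at h ⊢
        have := hA.2.1 p' hp' q' hq' h
        rw [this]
      · rintro p hp q hq h
        obtain ⟨p', hp', rfl⟩ := Finset.mem_image.mp hp
        obtain ⟨q', hq', rfl⟩ := Finset.mem_image.mp hq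
        have hp2 := two_le_snd hA hp'
        have hq2 := two_le_snd hA hq'
        simp only at h ⊢
        have : p'.2 = q'.2 := by omega
        have := hA.2.2 p' hp' q' hq' this
        rw [this]
      · intro he
        exact hnc (enhanced_to_cross (fun p hp => two_le_snd hA hp) he)
    · -- inj on
      rintro A ⟨hA, _⟩ A' ⟨hA', _⟩ h
      exact Finset.Subset.antisymm
        (vartheta_subset (fun p hp => two_le_snd hA hp) (fun p hp => two_le_snd hA' hp) h)
        (vartheta_subset (fun p hp => two_le_snd hA' hp) (fun p hp => two_le_snd hA hp) h.symm)
    · -- surj on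
      rintro B ⟨hB, hnc⟩
      refine ⟨B.image (fun p => (p.1, p.2 + 1)), ⟨⟨?_, ?_, ?_⟩, ?_⟩, ?_⟩
      · rintro p hp
        obtain ⟨q, hq, rfl⟩ := Finset.mem_image.mp hp
        have := hB.1 q hq; simp only; omega
      · rintro p hp q hq h
        obtain ⟨p', hp', rfl⟩ := Finset.mem_image.mp hp
        obtain ⟨q', hq', rfl⟩ := Finset.mem_image.mp hq
        simp only at h ⊢
        have := hB.2.1 p' hp' q' hq' h; rw [this]
      · rintro p hp q hq h
        obtain ⟨p', hp', rfl⟩ := Finset.mem_image.mp hp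
        obtain ⟨q', hq', rfl⟩ := Finset.mem_image.mp hq
        simp only at h ⊢
        have : p'.2 = q'.2 := by omega
        have := hB.2.2 p' hp' q' hq' this; rw [this]
      · -- noncrossing of preimage
        intro hc
        apply hnc
        have heq : vartheta (B.image (fun p => (p.1, p.2 + 1))) = B := by
          ext p
          simp only [vartheta, Finset.mem_image]
          constructor
          · rintro ⟨q, ⟨r, hr, rfl⟩, rfl⟩
            simpa using hr
          · intro hp
            exact ⟨(p.1, p.2 + 1), ⟨p, hp, rfl⟩, by simp⟩
        rw [← heq]
        apply cross_to_enhanced ?_ hc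
        rintro p hp
        obtain ⟨q, hq, rfl⟩ := Finset.mem_image.mp hp
        have := hB.1 q hq; simp only; omega
      · -- vartheta of preimage = B
        ext p
        simp only [vartheta, Finset.mem_image]
        constructor
        · rintro ⟨q, ⟨r, hr, rfl⟩, rfl⟩
          simpa using hr
        · intro hp
          exact ⟨(p.1, p.2 + 1), ⟨p, hp, rfl⟩, by simp⟩
  · intro A hA _ i j hij
    exact mem_iff_vartheta (fun p hp => two_le_snd hA hp) (by omega)
end

section
/- Fix an integer k ≥ 3 and an integer n ≥ 1. The map sending a set A of arcs to {(i, j−1) : (i, j) ∈ A} is a well-defined bijection from the set of 2-regular k-noncrossing partition diagrams on [n] onto the set of enhanced k-noncrossing partition diagrams on [n−1]. -/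
/-- A partition diagram is 2-regular if it contains no arc `(i, i+1)`. -/
def TwoRegular (A : Finset (ℕ × ℕ)) : Prop := ∀ i : ℕ, (i, i + 1) ∉ A

/-- The inverse of `vartheta`: shift right endpoints up by one. -/
def shiftArcs (B : Finset (ℕ × ℕ)) : Finset (ℕ × ℕ) :=
  B.image (fun p => (p.1, p.2 + 1))

lemma vartheta_shiftArcs (B : Finset (ℕ × ℕ)) : vartheta (shiftArcs B) = B := by
  ext p
  simp only [vartheta, shiftArcs, Finset.image_image, Finset.mem_image, Function.comp]
  constructor
  · rintro ⟨q, hq, rfl⟩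
    simpa using hq
  · intro hp
    exact ⟨p, hp, by simp⟩

lemma shiftArcs_vartheta (A : Finset (ℕ × ℕ)) (h : ∀ p ∈ A, 1 ≤ p.2) :
    shiftArcs (vartheta A) = A := by
  ext p
  simp only [vartheta, shiftArcs, Finset.image_image, Finset.mem_image, Function.comp]
  constructor
  · rintro ⟨q, hq, rfl⟩
    have h1 := h q hq
    have h2 : ((q.1, q.2 - 1).1, (q.2 - 1) + 1) = q := by
      obtain ⟨a, b⟩ := q
      simp at h1 ⊢
      omega
    simpa [h2] using hq
  · intro hp
    refine ⟨p, hp, ?_⟩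
    have h1 := h p hp
    obtain ⟨a, b⟩ := p
    simp at h1 ⊢
    omega

lemma cross_of_enhanced {k : ℕ} {A : Finset (ℕ × ℕ)}
    (hA : ∀ p ∈ A, 1 ≤ p.1 ∧ p.1 < p.2)
    (h : HasEnhancedKCrossing k (vartheta A)) : HasKCrossing k A := by
  obtain ⟨f, hf, hm1, hm2, hle⟩ := h
  choose g hg hgf using fun s => Finset.mem_image.mp (hf s)
  have e1 : ∀ s, (g s).1 = (f s).1 := fun s => by rw [← hgf s]
  have e2 : ∀ s, (g s).2 - 1 = (f s).2 := fun s => by rw [← hgf s]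
  have h2 : ∀ s, 2 ≤ (g s).2 := fun s => by
    have := hA (g s) (hg s); omega
  refine ⟨g, hg, ?_, ?_, ?_⟩
  · intro s t hst
    simp only
    rw [e1 s, e1 t]
    exact hm1 hst
  · intro s t hst
    have := hm2 hst
    simp only at this ⊢
    have hs := e2 s; have ht := e2 t
    have := h2 s; have := h2 t
    omega
  · intro s t
    have := hle s t
    have hs := e1 s; have ht := e2 t
    have := h2 t
    omega

lemma enhanced_of_cross {k : ℕ} {A : Finset (ℕ × ℕ)}
    (hA : ∀ p ∈ A, 1 ≤ p.2)
    (h : HasKCrossing k A) : HasEnhancedKCrossing k (vartheta A) := by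
  obtain ⟨f, hf, hm1, hm2, hlt⟩ := h
  refine ⟨fun s => ((f s).1, (f s).2 - 1), fun s => Finset.mem_image.mpr ⟨f s, hf s, rfl⟩,
    ?_, ?_, ?_⟩
  · intro s t hst
    exact hm1 hst
  · intro s t hst
    have h' : (f s).2 < (f t).2 := hm2 hst
    have := hA (f s) (hf s)
    have := hA (f t) (hf t)
    show (f s).2 - 1 < (f t).2 - 1
    omega
  · intro s t
    have h' : (f s).1 < (f t).2 := hlt s t
    have := hA (f t) (hf t)
    show (f s).1 ≤ (f t).2 - 1
    omega

/-- The map `ϑ : A ↦ {(i,j-1) : (i,j) ∈ A}` is a well-defined bijection from the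
2-regular `k`-noncrossing partition diagrams on `[n]` onto the enhanced
`k`-noncrossing partition diagrams on `[n-1]`. -/
theorem vartheta_bijOn_twoRegular_enhanced (k n : ℕ) (hk : 3 ≤ k) (hn : 1 ≤ n) :
    Set.BijOn vartheta
      {A : Finset (ℕ × ℕ) | IsPartitionDiagram n A ∧ ¬ HasKCrossing k A ∧ TwoRegular A}
      {B : Finset (ℕ × ℕ) | IsPartitionDiagram (n - 1) B ∧ ¬ HasEnhancedKCrossing k B} := by
  constructor
  · -- MapsTo
    rintro A ⟨⟨hb, hl, hr⟩, hcr, h2⟩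
    have hge2 : ∀ p ∈ A, p.1 + 2 ≤ p.2 := by
      intro p hp
      obtain ⟨hp1, hp2, hp3⟩ := hb p hp
      rcases Nat.lt_or_ge (p.1 + 1) p.2 with h | h
      · omega
      · exfalso
        have : p = (p.1, p.1 + 1) := by
          obtain ⟨a, b⟩ := p; simp at hp2 h ⊢; omega
        exact h2 p.1 (this ▸ hp)
    refine ⟨⟨?_, ?_, ?_⟩, ?_⟩
    · rintro p hp
      obtain ⟨q, hq, rfl⟩ := Finset.mem_image.mp hp
      obtain ⟨h1, h2', h3⟩ := hb q hq
      have := hge2 q hq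
      simp only
      omega
    · rintro p hp q hq hpq
      obtain ⟨p', hp', rfl⟩ := Finset.mem_image.mp hp
      obtain ⟨q', hq', rfl⟩ := Finset.mem_image.mp hq
      simp only at hpq
      rw [hl p' hp' q' hq' hpq]
    · rintro p hp q hq hpq
      obtain ⟨p', hp', rfl⟩ := Finset.mem_image.mp hp
      obtain ⟨q', hq', rfl⟩ := Finset.mem_image.mp hq
      simp only at hpq
      have hp2 := (hb p' hp').2.1
      have hq2 := (hb q' hq').2.1
      have hp1 := (hb p' hp').1
      have hq1 := (hb q' hq').1
      have : p'.2 = q'.2 := by omega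
      rw [hr p' hp' q' hq' this]
    · intro h
      exact hcr (cross_of_enhanced (fun p hp => ⟨(hb p hp).1, (hb p hp).2.1⟩) h)
  constructor
  · -- InjOn
    rintro A ⟨⟨hb, _, _⟩, _, _⟩ A' ⟨⟨hb', _, _⟩, _, _⟩ hAA'
    have h1 : ∀ p ∈ A, 1 ≤ p.2 := fun p hp => by have := hb p hp; omega
    have h1' : ∀ p ∈ A', 1 ≤ p.2 := fun p hp => by have := hb' p hp; omega
    rw [← shiftArcs_vartheta A h1, ← shiftArcs_vartheta A' h1', hAA']
  · -- SurjOn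
    rintro B ⟨⟨hb, hl, hr⟩, hcr⟩
    refine ⟨shiftArcs B, ⟨⟨?_, ?_, ?_⟩, ?_, ?_⟩, vartheta_shiftArcs B⟩
    · rintro p hp
      obtain ⟨q, hq, rfl⟩ := Finset.mem_image.mp hp
      obtain ⟨h1, h2', h3⟩ := hb q hq
      simp only
      omega
    · rintro p hp q hq hpq
      obtain ⟨p', hp', rfl⟩ := Finset.mem_image.mp hp
      obtain ⟨q', hq', rfl⟩ := Finset.mem_image.mp hq
      simp only at hpq
      rw [hl p' hp' q' hq' hpq]
    · rintro p hp q hq hpq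
      obtain ⟨p', hp', rfl⟩ := Finset.mem_image.mp hp
      obtain ⟨q', hq', rfl⟩ := Finset.mem_image.mp hq
      simp only at hpq
      have : p'.2 = q'.2 := by omega
      rw [hr p' hp' q' hq' this]
    · -- no k-crossing in shiftArcs B
      intro h
      have hge : ∀ p ∈ shiftArcs B, 1 ≤ p.2 := by
        rintro p hp
        obtain ⟨q, hq, rfl⟩ := Finset.mem_image.mp hp
        simp only
        omega
      have := enhanced_of_cross hge h
      rw [vartheta_shiftArcs B] at this
      exact hcr this
    · -- TwoRegular
      intro i hi
      obtain ⟨q, hq, he⟩ := Finset.mem_image.mp hi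
      have := (hb q hq).2.1
      have : q.2 + 1 = i + 1 ∧ q.1 = i := by
        constructor <;> [exact congrArg Prod.snd he; exact congrArg Prod.fst he]
      omega
end

section
/- Fix an integer k ≥ 3 and an integer n ≥ 1. If A is a 2-regular k-noncrossing partition diagram on [n], then the set A' = {(i, j−1) : (i, j) ∈ A} is an enhanced k-noncrossing partition diagram on [n−1]. -/
/-- If `A` is a 2-regular `k`-noncrossing partition diagram on `[n]`, then
`A' = {(i,j-1) : (i,j) ∈ A}` is an enhanced `k`-noncrossing partition diagram on `[n-1]`. -/
theorem vartheta_mem_enhanced (k n : ℕ) (hk : 3 ≤ k) (hn : 1 ≤ n)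
    (A : Finset (ℕ × ℕ)) (hA : IsPartitionDiagram n A) (hcr : ¬ HasKCrossing k A)
    (hreg : TwoRegular A) :
    IsPartitionDiagram (n - 1) (vartheta A) ∧ ¬ HasEnhancedKCrossing k (vartheta A) := by
  obtain ⟨hbd, hl, hr⟩ := hA
  -- every arc of A has p.2 ≥ p.1 + 2
  have key : ∀ p ∈ A, p.1 + 2 ≤ p.2 := by
    intro p hp
    obtain ⟨h1, h2, h3⟩ := hbd p hp
    rcases Nat.lt_or_ge (p.1 + 1) p.2 with h | h
    · omega
    · have : p.2 = p.1 + 1 := by omega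
      exfalso
      have := hreg p.1
      rw [show (p.1, p.1 + 1) = p from by
        cases p; simp_all] at this
      exact this hp
  constructor
  · refine ⟨?_, ?_, ?_⟩
    · intro p hp
      simp only [vartheta, Finset.mem_image] at hp
      obtain ⟨q, hq, hqp⟩ := hp
      obtain ⟨h1, h2, h3⟩ := hbd q hq
      have := key q hq
      subst hqp
      simp only
      omega
    · intro p hp q hq hpq
      simp only [vartheta, Finset.mem_image] at hp hq
      obtain ⟨p', hp', hpp⟩ := hp
      obtain ⟨q', hq', hqq⟩ := hq
      subst hpp; subst hqq
      have := hl p' hp' q' hq' hpq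
      rw [this]
    · intro p hp q hq hpq
      simp only [vartheta, Finset.mem_image] at hp hq
      obtain ⟨p', hp', hpp⟩ := hp
      obtain ⟨q', hq', hqq⟩ := hq
      have kp := key p' hp'
      have kq := key q' hq'
      subst hpp; subst hqq
      simp only at hpq
      have : p'.2 = q'.2 := by omega
      rw [hr p' hp' q' hq' this]
  · intro ⟨f, hf, hm1, hm2, hle⟩
    apply hcr
    have hg : ∀ s : Fin k, ∃ q ∈ A, (q.1, q.2 - 1) = f s := by
      intro s
      have := hf s
      simp only [vartheta, Finset.mem_image] at this
      exact this
    choose g hg1 hg2 using hg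
    refine ⟨g, hg1, ?_, ?_, ?_⟩
    · intro s t hst
      have e1 := hg2 s; have e2 := hg2 t
      have := hm1 hst
      simp only at this
      have : (f s).1 < (f t).1 := this
      rw [← e1, ← e2] at this
      exact this
    · intro s t hst
      have e1 := hg2 s; have e2 := hg2 t
      have h2 := hm2 hst
      simp only at h2
      have ks := key (g s) (hg1 s)
      have kt := key (g t) (hg1 t)
      have d1 : (g s).2 - 1 = (f s).2 := by rw [← e1]
      have d2 : (g t).2 - 1 = (f t).2 := by rw [← e2]
      show (g s).2 < (g t).2
      omega
    · intro s t
      have e1 := hg2 s; have e2 := hg2 t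
      have h := hle s t
      have kt := key (g t) (hg1 t)
      have d1 : (g s).1 = (f s).1 := by rw [← e1]
      have d2 : (g t).2 - 1 = (f t).2 := by rw [← e2]
      omega
end

section
/- Fix an integer k ≥ 3 and an integer n ≥ 1. If B is an enhanced k-noncrossing partition diagram on [n−1], then the set A = {(i, j+1) : (i, j) ∈ B} is a 2-regular k-noncrossing partition diagram on [n]. -/
/-- If `B` is an enhanced `k`-noncrossing partition diagram on `[n-1]`, then
`A = {(i,j+1) : (i,j) ∈ B}` is a 2-regular `k`-noncrossing partition diagram on `[n]`. -/
theorem shift_up_mem_twoRegular (k n : ℕ) (hk : 3 ≤ k) (hn : 1 ≤ n)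
    (B : Finset (ℕ × ℕ)) (hB : IsPartitionDiagram (n - 1) B)
    (hcr : ¬ HasEnhancedKCrossing k B) :
    IsPartitionDiagram n (B.image (fun p => (p.1, p.2 + 1))) ∧
    ¬ HasKCrossing k (B.image (fun p => (p.1, p.2 + 1))) ∧
    TwoRegular (B.image (fun p => (p.1, p.2 + 1))) := by
  obtain ⟨hb, hl, hr⟩ := hB
  refine ⟨⟨?_, ?_, ?_⟩, ?_, ?_⟩
  · rintro p hp
    simp only [Finset.mem_image] at hp
    obtain ⟨q, hq, rfl⟩ := hp
    obtain ⟨h1, h2, h3⟩ := hb q hq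
    exact ⟨h1, by omega, by omega⟩
  · rintro p hp q hq h
    simp only [Finset.mem_image] at hp hq
    obtain ⟨p', hp', rfl⟩ := hp
    obtain ⟨q', hq', rfl⟩ := hq
    simp only at h ⊢
    have := hl p' hp' q' hq' h
    rw [this]
  · rintro p hp q hq h
    simp only [Finset.mem_image] at hp hq
    obtain ⟨p', hp', rfl⟩ := hp
    obtain ⟨q', hq', rfl⟩ := hq
    simp only at h ⊢
    have := hr p' hp' q' hq' (by omega)
    rw [this]
  · rintro ⟨f, hf, hm1, hm2, hlt⟩
    apply hcr
    refine ⟨fun s => ((f s).1, (f s).2 - 1), fun s => ?_, ?_, ?_, fun s t => ?_⟩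
    · have := hf s
      simp only [Finset.mem_image] at this
      obtain ⟨q, hq, he⟩ := this
      have : ((f s).1, (f s).2 - 1) = q := by
        obtain ⟨a, b⟩ := q
        simp only [Prod.ext_iff] at he ⊢
        omega
      show ((f s).1, (f s).2 - 1) ∈ B
      rwa [this]
    · exact hm1
    · intro s t hst
      have h1 := hm2 hst
      have h2 : 1 ≤ (f s).2 := by
        have := hf s
        simp only [Finset.mem_image] at this
        obtain ⟨q, hq, he⟩ := this
        have := hb q hq
        simp only [Prod.ext_iff] at he
        omega
      have h1' : (f s).2 < (f t).2 := h1
      show (f s).2 - 1 < (f t).2 - 1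
      omega
    · have := hlt s t
      show (f s).1 ≤ (f t).2 - 1
      omega
  · intro i hi
    simp only [Finset.mem_image] at hi
    obtain ⟨q, hq, he⟩ := hi
    have := hb q hq
    simp only [Prod.ext_iff] at he
    omega
end

section
/- Fix an integer k ≥ 3 and n ∈ ℕ. The map sending a braid diagram B on [n] to the set of its non-loop elements {(i,j) ∈ B : i < j} is a bijection from the set of k-noncrossing braid diagrams on [n] having no isolated vertex onto the set of enhanced k-noncrossing partition diagrams on [n]. -/
/-- `v ∈ [n]` has no isolated vertex in `B`: every `v ∈ [n]` occurs in some element of `B`. -/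
def NoIsolatedVertex (n : ℕ) (B : Finset (ℕ × ℕ)) : Prop :=
  ∀ v : ℕ, 1 ≤ v → v ≤ n → ∃ p ∈ B, p.1 = v ∨ p.2 = v

lemma crossing_no_loop {k : ℕ} (hk : 2 ≤ k) (f : Fin k → ℕ × ℕ)
    (h1 : StrictMono fun s => (f s).1) (h2 : StrictMono fun s => (f s).2)
    (hle : ∀ s t : Fin k, (f s).1 ≤ (f t).2) (r : Fin k)
    (hloop : (f r).1 = (f r).2) : False := by
  rcases lt_or_ge (r.val + 1) k with h | h
  · have ht : (f ⟨r.val + 1, h⟩).1 ≤ (f r).2 := hle _ _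
    have hlt : (f r).1 < (f ⟨r.val + 1, h⟩).1 := h1 (by simp [Fin.lt_def])
    omega
  · have hs : r.val - 1 < k := by omega
    have hlt : (f ⟨r.val - 1, hs⟩).2 < (f r).2 := by
      apply h2
      have : 1 ≤ r.val := by omega
      simp [Fin.lt_def]; omega
    have := hle r ⟨r.val - 1, hs⟩
    omega

lemma subset_of_filter_eq {n : ℕ} {B₁ B₂ : Finset (ℕ × ℕ)}
    (h1 : IsBraidDiagram n B₁) (h2 : IsBraidDiagram n B₂)
    (hi2 : NoIsolatedVertex n B₂)
    (heq : B₁.filter (fun p => p.1 < p.2) = B₂.filter (fun p => p.1 < p.2)) :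
    B₁ ⊆ B₂ := by
  intro p hp
  obtain ⟨hp1, hp12, hp2⟩ := h1.1 p hp
  rcases lt_or_eq_of_le hp12 with hlt | hpe
  · have : p ∈ B₂.filter (fun p => p.1 < p.2) := by
      rw [← heq]; exact Finset.mem_filter.mpr ⟨hp, hlt⟩
    exact (Finset.mem_filter.mp this).1
  · obtain ⟨q, hq, hqv⟩ := hi2 p.1 hp1 (hpe ▸ hp2)
    rcases lt_or_eq_of_le (h2.1 q hq).2.1 with hqlt | hqe
    · exfalso
      have hq1 : q ∈ B₁ := by
        have : q ∈ B₁.filter (fun p => p.1 < p.2) := by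
          rw [heq]; exact Finset.mem_filter.mpr ⟨hq, hqlt⟩
        exact (Finset.mem_filter.mp this).1
      rcases hqv with h | h
      · have := h1.2.1 p hp q hq1 h.symm
        subst this; omega
      · have := h1.2.2 p hp q hq1 (by omega)
        subst this; omega
    · have : q = p := by
        rcases hqv with h | h
        · exact Prod.ext h (by omega)
        · exact Prod.ext (by omega) (by omega)
      exact this ▸ hq

/-- The map sending a braid diagram `B` to its set of non-loop elements
`{(i,j) ∈ B : i < j}` is a bijection from the `k`-noncrossing braid diagrams on `[n]`
without isolated vertices onto the enhanced `k`-noncrossing partition diagrams on `[n]`. -/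
theorem braid_filter_bijOn_enhanced (k : ℕ) (n : ℕ) (hk : 3 ≤ k) :
    Set.BijOn (fun B : Finset (ℕ × ℕ) => B.filter (fun p => p.1 < p.2))
      {B : Finset (ℕ × ℕ) | IsBraidDiagram n B ∧ ¬ HasEnhancedKCrossing k B ∧
        NoIsolatedVertex n B}
      {A : Finset (ℕ × ℕ) | IsPartitionDiagram n A ∧ ¬ HasEnhancedKCrossing k A} := by
  refine ⟨?_, ?_, ?_⟩
  · -- MapsTo
    rintro B ⟨hB, hnc, -⟩
    obtain ⟨hb1, hb2, hb3⟩ := hB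
    refine ⟨⟨?_, ?_, ?_⟩, ?_⟩
    · intro p hp
      obtain ⟨hp, hlt⟩ := Finset.mem_filter.mp hp
      obtain ⟨h1, -, h3⟩ := hb1 p hp
      exact ⟨h1, hlt, h3⟩
    · intro p hp q hq h
      exact hb2 p (Finset.mem_filter.mp hp).1 q (Finset.mem_filter.mp hq).1 h
    · intro p hp q hq h
      exact hb3 p (Finset.mem_filter.mp hp).1 q (Finset.mem_filter.mp hq).1 h
    · rintro ⟨f, hf, hm1, hm2, hle⟩
      exact hnc ⟨f, fun s => (Finset.mem_filter.mp (hf s)).1, hm1, hm2, hle⟩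
  · -- InjOn
    rintro B₁ ⟨h1, -, hi1⟩ B₂ ⟨h2, -, hi2⟩ heq
    exact Finset.Subset.antisymm (subset_of_filter_eq h1 h2 hi2 heq)
      (subset_of_filter_eq h2 h1 hi1 heq.symm)
  · -- SurjOn
    rintro A ⟨hA, hnc⟩
    obtain ⟨ha1, ha2, ha3⟩ := hA
    set L : Finset (ℕ × ℕ) :=
      ((Finset.Icc 1 n).filter fun v => ∀ p ∈ A, p.1 ≠ v ∧ p.2 ≠ v).image fun v => (v, v)
      with hL
    have hmemL : ∀ p : ℕ × ℕ, p ∈ L ↔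
        p.1 = p.2 ∧ 1 ≤ p.1 ∧ p.1 ≤ n ∧ ∀ q ∈ A, q.1 ≠ p.1 ∧ q.2 ≠ p.1 := by
      intro p
      simp only [hL, Finset.mem_image, Finset.mem_filter, Finset.mem_Icc]
      constructor
      · rintro ⟨v, ⟨⟨hv1, hv2⟩, hv3⟩, rfl⟩
        exact ⟨rfl, hv1, hv2, hv3⟩
      · rintro ⟨he, h1, h2, h3⟩
        exact ⟨p.1, ⟨⟨h1, h2⟩, h3⟩, Prod.ext rfl he⟩
    refine ⟨A ∪ L, ⟨⟨?_, ?_, ?_⟩, ?_, ?_⟩, ?_⟩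
    · intro p hp
      rcases Finset.mem_union.mp hp with h | h
      · obtain ⟨a, b, c⟩ := ha1 p h; exact ⟨a, le_of_lt b, c⟩
      · obtain ⟨he, h1, h2, -⟩ := (hmemL p).mp h; exact ⟨h1, le_of_eq he, he ▸ h2⟩
    · intro p hp q hq h
      rcases Finset.mem_union.mp hp with hp' | hp' <;>
        rcases Finset.mem_union.mp hq with hq' | hq'
      · exact ha2 p hp' q hq' h
      · exact absurd h (((hmemL q).mp hq').2.2.2 p hp').1
      · exact absurd h.symm (((hmemL p).mp hp').2.2.2 q hq').1
      · obtain ⟨hep, -⟩ := (hmemL p).mp hp'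
        obtain ⟨heq', -⟩ := (hmemL q).mp hq'
        exact Prod.ext h (by omega)
    · intro p hp q hq h
      rcases Finset.mem_union.mp hp with hp' | hp' <;>
        rcases Finset.mem_union.mp hq with hq' | hq'
      · exact ha3 p hp' q hq' h
      · obtain ⟨heq', -, -, hq3⟩ := (hmemL q).mp hq'
        exact absurd (by omega : p.2 = q.1) (hq3 p hp').2
      · obtain ⟨hep, -, -, hp3⟩ := (hmemL p).mp hp'
        exact absurd (by omega : q.2 = p.1) (hp3 q hq').2
      · obtain ⟨hep, -⟩ := (hmemL p).mp hp'
        obtain ⟨heq', -⟩ := (hmemL q).mp hq'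
        exact Prod.ext (by omega) h
    · -- no enhanced crossing in A ∪ L
      rintro ⟨f, hf, hm1, hm2, hle⟩
      have hfA : ∀ s, f s ∈ A := by
        intro s
        rcases Finset.mem_union.mp (hf s) with h | h
        · exact h
        · exact absurd ((hmemL (f s)).mp h).1
            (fun he => crossing_no_loop (by omega) f hm1 hm2 hle s he)
      exact hnc ⟨f, hfA, hm1, hm2, hle⟩
    · -- no isolated vertex
      intro v hv1 hv2
      by_cases h : ∃ p ∈ A, p.1 = v ∨ p.2 = v
      · obtain ⟨p, hp, hpv⟩ := h
        exact ⟨p, Finset.mem_union_left _ hp, hpv⟩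
      · push_neg at h
        refine ⟨(v, v), Finset.mem_union_right _ ((hmemL (v, v)).mpr ?_), Or.inl rfl⟩
        refine ⟨rfl, hv1, hv2, fun q hq => ?_⟩
        exact h q hq
    · -- filter gives back A
      ext p
      simp only [Finset.mem_filter, Finset.mem_union]
      constructor
      · rintro ⟨h | h, hlt⟩
        · exact h
        · exact absurd ((hmemL p).mp h).1 (by omega)
      · intro h
        exact ⟨Or.inl h, (ha1 p h).2.1⟩
end

section
/- Fix an integer k ≥ 3 and an integer n ≥ 1. The number of 2-regular k-noncrossing partition diagrams on [n] equals the number of k-noncrossing braid diagrams on [n−1] having no isolated vertex. -/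
section Aux

/-- Loops at the vertices of `[n]` that are isolated in `C`. -/
def loopsOf (n : ℕ) (C : Finset (ℕ × ℕ)) : Finset (ℕ × ℕ) :=
  ((Finset.Icc 1 n).filter (fun v => ∀ p ∈ C, p.1 ≠ v ∧ p.2 ≠ v)).image (fun v => (v, v))

def phiMap (n : ℕ) (A : Finset (ℕ × ℕ)) : Finset (ℕ × ℕ) :=
  vartheta A ∪ loopsOf (n - 1) (vartheta A)

def psiMap (B : Finset (ℕ × ℕ)) : Finset (ℕ × ℕ) :=
  (B.filter (fun p => p.1 < p.2)).image (fun p => (p.1, p.2 + 1))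

lemma mem_loopsOf {n : ℕ} {C : Finset (ℕ × ℕ)} {p : ℕ × ℕ} :
    p ∈ loopsOf n C ↔ ∃ v, (1 ≤ v ∧ v ≤ n) ∧ (∀ q ∈ C, q.1 ≠ v ∧ q.2 ≠ v) ∧ (v, v) = p := by
  simp only [loopsOf, Finset.mem_image, Finset.mem_filter, Finset.mem_Icc]
  tauto

lemma loop_of_mem_loopsOf {n : ℕ} {C : Finset (ℕ × ℕ)} {p : ℕ × ℕ}
    (h : p ∈ loopsOf n C) : p.1 = p.2 := by
  rcases mem_loopsOf.1 h with ⟨v, _, _, hv⟩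
  rw [← hv]

lemma no_loop_in_crossing {k : ℕ} (hk : 2 ≤ k) (f : Fin k → ℕ × ℕ)
    (h1 : StrictMono (fun s => (f s).1)) (h2 : StrictMono (fun s => (f s).2))
    (h3 : ∀ s t : Fin k, (f s).1 ≤ (f t).2)
    (s₀ : Fin k) (hl : (f s₀).1 = (f s₀).2) : False := by
  have hk0 : 0 < k := by omega
  have h₁ : s₀.val = k - 1 := by
    by_contra h
    have hlt : s₀ < (⟨k - 1, by omega⟩ : Fin k) := by
      rw [Fin.lt_def]
      show s₀.val < k - 1
      have := s₀.isLt
      omega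
    have ha := h1 hlt
    have hb := h3 ⟨k - 1, by omega⟩ s₀
    simp only at ha
    omega
  have h₂ : s₀.val = 0 := by
    by_contra h
    have hlt : (⟨0, hk0⟩ : Fin k) < s₀ := by
      rw [Fin.lt_def]
      show 0 < s₀.val
      omega
    have ha := h2 hlt
    have hb := h3 s₀ ⟨0, hk0⟩
    simp only at ha
    omega
  omega

/-- An enhanced k-crossing of `phiMap n A` yields a k-crossing of `A`. -/
lemma crossing_of_enhanced {k n : ℕ} (hk : 2 ≤ k) {A : Finset (ℕ × ℕ)}
    (hA : ∀ p ∈ A, 1 ≤ p.1 ∧ p.1 < p.2)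
    (h : HasEnhancedKCrossing k (phiMap n A)) : HasKCrossing k A := by
  obtain ⟨f, hf, h1, h2, h3⟩ := h
  have hmem : ∀ s, f s ∈ vartheta A := by
    intro s
    rcases Finset.mem_union.1 (hf s) with h | h
    · exact h
    · exact absurd (loop_of_mem_loopsOf h)
        (fun hl => no_loop_in_crossing hk f h1 h2 h3 s hl)
  have hpre : ∀ s, ∃ q ∈ A, (q.1, q.2 - 1) = f s := by
    intro s
    simpa [vartheta, Finset.mem_image] using hmem s
  choose g hg1 hg2 using hpre
  have hg1' : ∀ s, (g s).1 = (f s).1 := fun s => by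
    have := hg2 s; exact (Prod.ext_iff.mp this).1
  have hg2' : ∀ s, (g s).2 = (f s).2 + 1 := by
    intro s
    have h2' : (g s).2 - 1 = (f s).2 := (Prod.ext_iff.mp (hg2 s)).2
    have := hA _ (hg1 s)
    omega
  refine ⟨g, hg1, ?_, ?_, ?_⟩
  · intro s t hst
    have := h1 hst
    simp only [hg1']
    simpa using this
  · intro s t hst
    have := h2 hst
    simp only [hg2']
    simpa using this
  · intro s t
    have := h3 s t
    rw [hg1' s, hg2' t]
    omega

/-- A k-crossing of `psiMap B` yields an enhanced k-crossing of `B`. -/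
lemma enhanced_of_crossing {k : ℕ} {B : Finset (ℕ × ℕ)}
    (h : HasKCrossing k (psiMap B)) : HasEnhancedKCrossing k B := by
  obtain ⟨f, hf, h1, h2, h3⟩ := h
  have hpre : ∀ s, ∃ q, (q ∈ B ∧ q.1 < q.2) ∧ (q.1, q.2 + 1) = f s := by
    intro s
    simpa [psiMap, Finset.mem_image, Finset.mem_filter] using hf s
  choose g hg1 hg2 using hpre
  have hg1' : ∀ s, (g s).1 = (f s).1 := fun s => (Prod.ext_iff.mp (hg2 s)).1
  have hg2' : ∀ s, (g s).2 + 1 = (f s).2 := fun s => (Prod.ext_iff.mp (hg2 s)).2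
  refine ⟨g, fun s => (hg1 s).1, ?_, ?_, ?_⟩
  · intro s t hst
    have := h1 hst
    simp only
    rw [hg1' s, hg1' t]
    simpa using this
  · intro s t hst
    have := h2 hst
    simp only at this ⊢
    have hs := hg2' s; have ht := hg2' t
    omega
  · intro s t
    have := h3 s t
    have hs := hg1' s; have ht := hg2' t
    omega

lemma phi_spec {n : ℕ} {A : Finset (ℕ × ℕ)} (hA : IsPartitionDiagram n A)
    (h2 : TwoRegular A) :
    IsBraidDiagram (n - 1) (phiMap n A) ∧ NoIsolatedVertex (n - 1) (phiMap n A) := by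
  obtain ⟨hb, hl, hr⟩ := hA
  have hv : ∀ p ∈ vartheta A, ∃ q ∈ A, (q.1, q.2 - 1) = p := by
    intro p hp
    simpa [vartheta, Finset.mem_image] using hp
  constructor
  · refine ⟨?_, ?_, ?_⟩
    · intro p hp
      rcases Finset.mem_union.1 hp with h | h
      · obtain ⟨q, hq, hqe⟩ := hv p h
        have := hb q hq
        have h2q := h2 q.1
        have hne : q.2 ≠ q.1 + 1 := by
          intro he
          exact h2q (by rw [← he]; exact (Prod.mk.eta (p := q)) ▸ hq)
        rw [← hqe]
        simp only
        omega
      · rcases mem_loopsOf.1 h with ⟨v, ⟨hv1, hv2⟩, _, hve⟩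
        rw [← hve]
        exact ⟨hv1, le_refl _, hv2⟩
    · intro p hp q hq he
      rcases Finset.mem_union.1 hp with h | h <;> rcases Finset.mem_union.1 hq with h' | h'
      · obtain ⟨a, ha, hae⟩ := hv p h
        obtain ⟨b, hbm, hbe⟩ := hv q h'
        have : a.1 = b.1 := by
          have e1 : a.1 = p.1 := (Prod.ext_iff.mp hae).1
          have e2 : b.1 = q.1 := (Prod.ext_iff.mp hbe).1
          omega
        have := hl a ha b hbm this
        rw [← hae, ← hbe, this]
      · rcases mem_loopsOf.1 h' with ⟨v, _, hiso, hve⟩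
        exact absurd ((hiso p h).1) (by rw [he, ← hve]; simp)
      · rcases mem_loopsOf.1 h with ⟨v, _, hiso, hve⟩
        exact absurd ((hiso q h').1) (by rw [← he, ← hve]; simp)
      · rcases mem_loopsOf.1 h with ⟨v, _, _, hve⟩
        rcases mem_loopsOf.1 h' with ⟨w, _, _, hwe⟩
        rw [← hve, ← hwe] at he ⊢
        simp only at he
        rw [he]
    · intro p hp q hq he
      rcases Finset.mem_union.1 hp with h | h <;> rcases Finset.mem_union.1 hq with h' | h'
      · obtain ⟨a, ha, hae⟩ := hv p h
        obtain ⟨b, hbm, hbe⟩ := hv q h'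
        have e1 : a.2 - 1 = p.2 := (Prod.ext_iff.mp hae).2
        have e2 : b.2 - 1 = q.2 := (Prod.ext_iff.mp hbe).2
        have ha2 := hb a ha
        have hb2 := hb b hbm
        have : a.2 = b.2 := by omega
        have := hr a ha b hbm this
        rw [← hae, ← hbe, this]
      · rcases mem_loopsOf.1 h' with ⟨v, _, hiso, hve⟩
        exact absurd ((hiso p h).2) (by rw [he, ← hve]; simp)
      · rcases mem_loopsOf.1 h with ⟨v, _, hiso, hve⟩
        exact absurd ((hiso q h').2) (by rw [← he, ← hve]; simp)
      · rcases mem_loopsOf.1 h with ⟨v, _, _, hve⟩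
        rcases mem_loopsOf.1 h' with ⟨w, _, _, hwe⟩
        rw [← hve, ← hwe] at he ⊢
        simp only at he
        rw [he]
  · intro v hv1 hv2
    by_cases hc : ∃ p ∈ vartheta A, p.1 = v ∨ p.2 = v
    · obtain ⟨p, hp, hpe⟩ := hc
      exact ⟨p, Finset.mem_union_left _ hp, hpe⟩
    · push_neg at hc
      refine ⟨(v, v), Finset.mem_union_right _ ?_, Or.inl rfl⟩
      exact mem_loopsOf.2 ⟨v, ⟨hv1, hv2⟩, fun q hq => hc q hq, rfl⟩

lemma psi_spec {n : ℕ} (hn : 1 ≤ n) {B : Finset (ℕ × ℕ)}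
    (hB : IsBraidDiagram (n - 1) B) :
    IsPartitionDiagram n (psiMap B) ∧ TwoRegular (psiMap B) := by
  obtain ⟨hb, hl, hr⟩ := hB
  have hv : ∀ p ∈ psiMap B, ∃ q, (q ∈ B ∧ q.1 < q.2) ∧ (q.1, q.2 + 1) = p := by
    intro p hp
    simpa [psiMap, Finset.mem_image, Finset.mem_filter] using hp
  constructor
  · refine ⟨?_, ?_, ?_⟩
    · intro p hp
      obtain ⟨q, ⟨hq, hqlt⟩, hqe⟩ := hv p hp
      have := hb q hq
      rw [← hqe]
      simp only
      omega
    · intro p hp q hq he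
      obtain ⟨a, ⟨ha, _⟩, hae⟩ := hv p hp
      obtain ⟨b, ⟨hbm, _⟩, hbe⟩ := hv q hq
      have e1 : a.1 = p.1 := (Prod.ext_iff.mp hae).1
      have e2 : b.1 = q.1 := (Prod.ext_iff.mp hbe).1
      have := hl a ha b hbm (by omega)
      rw [← hae, ← hbe, this]
    · intro p hp q hq he
      obtain ⟨a, ⟨ha, _⟩, hae⟩ := hv p hp
      obtain ⟨b, ⟨hbm, _⟩, hbe⟩ := hv q hq
      have e1 : a.2 + 1 = p.2 := (Prod.ext_iff.mp hae).2
      have e2 : b.2 + 1 = q.2 := (Prod.ext_iff.mp hbe).2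
      have := hr a ha b hbm (by omega)
      rw [← hae, ← hbe, this]
  · intro i hi
    obtain ⟨q, ⟨hq, hqlt⟩, hqe⟩ := hv _ hi
    have e1 : q.1 = i := (Prod.ext_iff.mp hqe).1
    have e2 : q.2 + 1 = i + 1 := (Prod.ext_iff.mp hqe).2
    omega

lemma psi_phi {n : ℕ} {A : Finset (ℕ × ℕ)} (hA : IsPartitionDiagram n A)
    (h2 : TwoRegular A) : psiMap (phiMap n A) = A := by
  obtain ⟨hb, _, _⟩ := hA
  ext p
  simp only [psiMap, Finset.mem_image, Finset.mem_filter]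
  constructor
  · rintro ⟨q, ⟨hq, hqlt⟩, hqe⟩
    rcases Finset.mem_union.1 hq with h | h
    · obtain ⟨a, ha, hae⟩ := Finset.mem_image.1 h
      have e1 : a.1 = q.1 := (Prod.ext_iff.mp hae).1
      have e2 : a.2 - 1 = q.2 := (Prod.ext_iff.mp hae).2
      have := hb a ha
      have : a = p := by
        rw [← hqe]
        have : a.2 = q.2 + 1 := by omega
        rw [Prod.ext_iff]
        exact ⟨e1, this⟩
      rw [← this]; exact ha
    · exact absurd (loop_of_mem_loopsOf h) (by omega)
  · intro hp
    have hple := hb p hp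
    have hpne : p.2 ≠ p.1 + 1 := by
      intro he
      exact h2 p.1 (by rw [← he]; exact (Prod.mk.eta (p := p)) ▸ hp)
    refine ⟨(p.1, p.2 - 1), ⟨?_, by simp; omega⟩, ?_⟩
    · exact Finset.mem_union_left _ (Finset.mem_image.2 ⟨p, hp, rfl⟩)
    · simp only
      rw [Prod.ext_iff]
      constructor
      · rfl
      · simp; omega

lemma phi_psi {n : ℕ} (hn : 1 ≤ n) {B : Finset (ℕ × ℕ)}
    (hB : IsBraidDiagram (n - 1) B) (hni : NoIsolatedVertex (n - 1) B) :
    phiMap n (psiMap B) = B := by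
  obtain ⟨hb, hl, hr⟩ := hB
  have hth : vartheta (psiMap B) = B.filter (fun p => p.1 < p.2) := by
    ext p
    simp only [vartheta, psiMap, Finset.mem_image, Finset.mem_filter]
    constructor
    · rintro ⟨q, hq, hqe⟩
      obtain ⟨a, ⟨ha, halt⟩, hae⟩ := hq
      have e1 : a.1 = q.1 := (Prod.ext_iff.mp hae).1
      have e2 : a.2 + 1 = q.2 := (Prod.ext_iff.mp hae).2
      have : a = p := by
        rw [← hqe, Prod.ext_iff]
        exact ⟨e1, by simp; omega⟩
      rw [← this]
      exact ⟨ha, halt⟩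
    · rintro ⟨hp, hplt⟩
      exact ⟨(p.1, p.2 + 1), ⟨p, ⟨hp, hplt⟩, rfl⟩, by simp⟩
  ext p
  simp only [phiMap, Finset.mem_union, hth]
  constructor
  · rintro (h | h)
    · exact (Finset.mem_filter.1 h).1
    · rcases mem_loopsOf.1 h with ⟨v, ⟨hv1, hv2⟩, hiso, hve⟩
      obtain ⟨q, hq, hqe⟩ := hni v hv1 hv2
      have hqloop : q.1 = q.2 := by
        by_contra hne
        have hlt : q.1 < q.2 := lt_of_le_of_ne (hb q hq).2.1 hne
        have := hiso q (Finset.mem_filter.2 ⟨hq, hlt⟩)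
        tauto
      have : q = (v, v) := by
        rw [Prod.ext_iff]
        rcases hqe with h' | h' <;> constructor <;> omega
      rw [← hve, ← this]
      exact hq
  · intro hp
    by_cases hlt : p.1 < p.2
    · exact Or.inl (Finset.mem_filter.2 ⟨hp, hlt⟩)
    · right
      have hple := hb p hp
      have hploop : p.1 = p.2 := by omega
      refine mem_loopsOf.2 ⟨p.1, ⟨hple.1, by omega⟩, ?_, by rw [Prod.ext_iff]; exact ⟨rfl, hploop⟩⟩
      intro q hq
      rcases Finset.mem_filter.1 hq with ⟨hqB, hqlt⟩
      constructor
      · intro he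
        have := hl q hqB p hp he
        rw [this] at hqlt
        omega
      · intro he
        have := hr q hqB p hp (by omega)
        rw [this] at hqlt
        omega

end Aux

/-- The number of 2-regular `k`-noncrossing partition diagrams on `[n]` equals the number
of `k`-noncrossing braid diagrams on `[n-1]` without isolated vertices. -/
theorem card_twoRegular_eq_card_braids (k n : ℕ) (hk : 3 ≤ k) (hn : 1 ≤ n) :
    Nat.card {A : Finset (ℕ × ℕ) //
        IsPartitionDiagram n A ∧ ¬ HasKCrossing k A ∧ TwoRegular A} =
    Nat.card {B : Finset (ℕ × ℕ) //
        IsBraidDiagram (n - 1) B ∧ ¬ HasEnhancedKCrossing k B ∧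
        NoIsolatedVertex (n - 1) B} := by
  exact Nat.card_congr
    { toFun := fun A => ⟨phiMap n A.1,
        (phi_spec A.2.1 A.2.2.2).1,
        fun hc => A.2.2.1 (crossing_of_enhanced (by omega)
          (fun p hp => ⟨(A.2.1.1 p hp).1, (A.2.1.1 p hp).2.1⟩) hc),
        (phi_spec A.2.1 A.2.2.2).2⟩
      invFun := fun B => ⟨psiMap B.1,
        (psi_spec hn B.2.1).1,
        fun hc => B.2.2.1 (enhanced_of_crossing hc),
        (psi_spec hn B.2.1).2⟩
      left_inv := fun A => Subtype.ext (psi_phi A.2.1 A.2.2.2)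
      right_inv := fun B => Subtype.ext (phi_psi hn B.2.1 B.2.2.2) }
end

section
/- Fix an integer k ≥ 3 and an integer n ≥ 1. The number of vacillating tableaux of length 2n all of whose shapes have fewer than k rows equals the number of hesitating tableaux of length 2(n−1) all of whose shapes have fewer than k rows. -/
/-- `ν` is obtained from `μ` by adding exactly one cell. -/
def AddOneCell (μ ν : YoungDiagram) : Prop :=
  ∃ c : ℕ × ℕ, c ∉ μ.cells ∧ ν.cells = insert c μ.cells

/-- `ν` is obtained from `μ` by removing exactly one cell. -/
def RemoveOneCell (μ ν : YoungDiagram) : Prop := AddOneCell ν μ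

/-- A vacillating tableau of length `2n`: a sequence `λ⁰,…,λ^{2n}` of Young diagrams
with `λ⁰ = λ^{2n} = ∅`, where each odd step does nothing or removes one cell and each
even step does nothing or adds one cell. -/
def IsVacillatingTableau (n : ℕ) (f : Fin (2 * n + 1) → YoungDiagram) : Prop :=
  f ⟨0, by omega⟩ = ⊥ ∧ f ⟨2 * n, by omega⟩ = ⊥ ∧
  ∀ i : Fin n,
    (f ⟨2 * i.val + 1, by have := i.isLt; omega⟩ = f ⟨2 * i.val, by have := i.isLt; omega⟩ ∨
      RemoveOneCell (f ⟨2 * i.val, by have := i.isLt; omega⟩)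
        (f ⟨2 * i.val + 1, by have := i.isLt; omega⟩)) ∧
    (f ⟨2 * i.val + 2, by have := i.isLt; omega⟩ = f ⟨2 * i.val + 1, by have := i.isLt; omega⟩ ∨
      AddOneCell (f ⟨2 * i.val + 1, by have := i.isLt; omega⟩)
        (f ⟨2 * i.val + 2, by have := i.isLt; omega⟩))

/-- A hesitating tableau of length `2n`: a sequence `λ⁰,…,λ^{2n}` of Young diagrams with
`λ⁰ = λ^{2n} = ∅`, where each pair of consecutive steps is one of: (do nothing, do nothing),
(remove one cell, do nothing), (do nothing, add one cell), (add one cell, remove one cell). -/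
def IsHesitatingTableau (n : ℕ) (f : Fin (2 * n + 1) → YoungDiagram) : Prop :=
  f ⟨0, by omega⟩ = ⊥ ∧ f ⟨2 * n, by omega⟩ = ⊥ ∧
  ∀ i : Fin n,
    (f ⟨2 * i.val + 1, by have := i.isLt; omega⟩ = f ⟨2 * i.val, by have := i.isLt; omega⟩ ∧
      f ⟨2 * i.val + 2, by have := i.isLt; omega⟩ = f ⟨2 * i.val + 1, by have := i.isLt; omega⟩) ∨
    (RemoveOneCell (f ⟨2 * i.val, by have := i.isLt; omega⟩)
        (f ⟨2 * i.val + 1, by have := i.isLt; omega⟩) ∧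
      f ⟨2 * i.val + 2, by have := i.isLt; omega⟩ = f ⟨2 * i.val + 1, by have := i.isLt; omega⟩) ∨
    (f ⟨2 * i.val + 1, by have := i.isLt; omega⟩ = f ⟨2 * i.val, by have := i.isLt; omega⟩ ∧
      AddOneCell (f ⟨2 * i.val + 1, by have := i.isLt; omega⟩)
        (f ⟨2 * i.val + 2, by have := i.isLt; omega⟩)) ∨
    (AddOneCell (f ⟨2 * i.val, by have := i.isLt; omega⟩)
        (f ⟨2 * i.val + 1, by have := i.isLt; omega⟩) ∧
      RemoveOneCell (f ⟨2 * i.val + 1, by have := i.isLt; omega⟩)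
        (f ⟨2 * i.val + 2, by have := i.isLt; omega⟩))

/-- Every shape in the tableau has fewer than `k` rows. -/
def FewerThanKRows (k : ℕ) {m : ℕ} (f : Fin m → YoungDiagram) : Prop :=
  ∀ j : Fin m, (f j).colLen 0 < k

section Aux

open Classical in
noncomputable def midYD (a b c : YoungDiagram) : YoungDiagram :=
  if b = a then c else if b = c then a else b

lemma midYD_eq1 {a b c : YoungDiagram} (h : b = a) : midYD a b c = c := by
  unfold midYD; rw [if_pos h]

lemma midYD_eq2 {a b c : YoungDiagram} (h1 : b ≠ a) (h2 : b = c) : midYD a b c = a := by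
  unfold midYD; rw [if_neg h1, if_pos h2]

lemma midYD_eq3 {a b c : YoungDiagram} (h1 : b ≠ a) (h2 : b ≠ c) : midYD a b c = b := by
  unfold midYD; rw [if_neg h1, if_neg h2]

lemma midYD_cases (a b c : YoungDiagram) : midYD a b c = a ∨ midYD a b c = b ∨ midYD a b c = c := by
  unfold midYD; split_ifs <;> tauto

lemma addOneCell_ne {μ ν : YoungDiagram} (h : AddOneCell μ ν) : μ ≠ ν := by
  obtain ⟨c, hc, hins⟩ := h
  intro he
  apply hc
  have hcν : c ∈ ν.cells := by rw [hins]; exact Finset.mem_insert_self c μ.cells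
  rwa [he]

lemma removeOneCell_ne {μ ν : YoungDiagram} (h : RemoveOneCell μ ν) : μ ≠ ν :=
  fun he => addOneCell_ne h he.symm

lemma not_addOneCell_bot {μ : YoungDiagram} : ¬ AddOneCell μ ⊥ := by
  rintro ⟨c, hc, hins⟩
  rw [YoungDiagram.cells_bot] at hins
  exact (Finset.insert_ne_empty c μ.cells) hins.symm

lemma not_removeOneCell_bot {ν : YoungDiagram} : ¬ RemoveOneCell ⊥ ν := not_addOneCell_bot

lemma colLen_bot (j : ℕ) : (⊥ : YoungDiagram).colLen j = 0 := by
  by_contra h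
  have h2 : (0, j) ∈ (⊥ : YoungDiagram) := YoungDiagram.mem_iff_lt_colLen.mpr (by omega)
  rw [← YoungDiagram.mem_cells, YoungDiagram.cells_bot] at h2
  exact absurd h2 (Finset.notMem_empty _)

/-! ### ℕ-indexed versions of the predicates -/

def VNat (n : ℕ) (f : ℕ → YoungDiagram) : Prop :=
  f 0 = ⊥ ∧ f (2 * n) = ⊥ ∧ ∀ i, i < n →
    (f (2 * i + 1) = f (2 * i) ∨ RemoveOneCell (f (2 * i)) (f (2 * i + 1))) ∧
    (f (2 * i + 2) = f (2 * i + 1) ∨ AddOneCell (f (2 * i + 1)) (f (2 * i + 2)))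

def HNat (n : ℕ) (f : ℕ → YoungDiagram) : Prop :=
  f 0 = ⊥ ∧ f (2 * n) = ⊥ ∧ ∀ i, i < n →
    (f (2 * i + 1) = f (2 * i) ∧ f (2 * i + 2) = f (2 * i + 1)) ∨
    (RemoveOneCell (f (2 * i)) (f (2 * i + 1)) ∧ f (2 * i + 2) = f (2 * i + 1)) ∨
    (f (2 * i + 1) = f (2 * i) ∧ AddOneCell (f (2 * i + 1)) (f (2 * i + 2))) ∨
    (AddOneCell (f (2 * i)) (f (2 * i + 1)) ∧ RemoveOneCell (f (2 * i + 1)) (f (2 * i + 2)))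

def extF {N : ℕ} (f : Fin N → YoungDiagram) (m : ℕ) : YoungDiagram :=
  if h : m < N then f ⟨m, h⟩ else ⊥

lemma extF_eq {N : ℕ} (f : Fin N → YoungDiagram) {m : ℕ} (h : m < N) :
    extF f m = f ⟨m, h⟩ := dif_pos h

lemma extF_bot {N : ℕ} (f : Fin N → YoungDiagram) {m : ℕ} (h : ¬ m < N) :
    extF f m = ⊥ := dif_neg h

lemma vac_iff (n : ℕ) (f : Fin (2 * n + 1) → YoungDiagram) :
    IsVacillatingTableau n f ↔ VNat n (extF f) := by
  constructor
  · rintro ⟨h0, h1, h2⟩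
    refine ⟨?_, ?_, ?_⟩
    · rw [extF_eq f (by omega)]; exact h0
    · rw [extF_eq f (by omega)]; exact h1
    · intro i hi
      rw [extF_eq f (show 2 * i < 2 * n + 1 by omega),
        extF_eq f (show 2 * i + 1 < 2 * n + 1 by omega),
        extF_eq f (show 2 * i + 2 < 2 * n + 1 by omega)]
      exact h2 ⟨i, hi⟩
  · rintro ⟨h0, h1, h2⟩
    refine ⟨?_, ?_, ?_⟩
    · rw [← extF_eq f (show (0:ℕ) < 2 * n + 1 by omega)]; exact h0
    · rw [← extF_eq f (show 2 * n < 2 * n + 1 by omega)]; exact h1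
    · intro i
      have hi := i.isLt
      have h3 := h2 i.val hi
      rw [extF_eq f (show 2 * i.val < 2 * n + 1 by omega),
        extF_eq f (show 2 * i.val + 1 < 2 * n + 1 by omega),
        extF_eq f (show 2 * i.val + 2 < 2 * n + 1 by omega)] at h3
      exact h3

lemma hes_iff (n : ℕ) (f : Fin (2 * n + 1) → YoungDiagram) :
    IsHesitatingTableau n f ↔ HNat n (extF f) := by
  constructor
  · rintro ⟨h0, h1, h2⟩
    refine ⟨?_, ?_, ?_⟩
    · rw [extF_eq f (by omega)]; exact h0
    · rw [extF_eq f (by omega)]; exact h1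
    · intro i hi
      rw [extF_eq f (show 2 * i < 2 * n + 1 by omega),
        extF_eq f (show 2 * i + 1 < 2 * n + 1 by omega),
        extF_eq f (show 2 * i + 2 < 2 * n + 1 by omega)]
      exact h2 ⟨i, hi⟩
  · rintro ⟨h0, h1, h2⟩
    refine ⟨?_, ?_, ?_⟩
    · rw [← extF_eq f (show (0:ℕ) < 2 * n + 1 by omega)]; exact h0
    · rw [← extF_eq f (show 2 * n < 2 * n + 1 by omega)]; exact h1
    · intro i
      have hi := i.isLt
      have h3 := h2 i.val hi
      rw [extF_eq f (show 2 * i.val < 2 * n + 1 by omega),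
        extF_eq f (show 2 * i.val + 1 < 2 * n + 1 by omega),
        extF_eq f (show 2 * i.val + 2 < 2 * n + 1 by omega)] at h3
      exact h3

lemma VNat_congr (n : ℕ) (f f' : ℕ → YoungDiagram) (h : ∀ m, m ≤ 2 * n → f m = f' m)
    (hf : VNat n f) : VNat n f' := by
  obtain ⟨h0, h1, h2⟩ := hf
  refine ⟨?_, ?_, ?_⟩
  · rw [← h 0 (by omega)]; exact h0
  · rw [← h (2 * n) le_rfl]; exact h1
  · intro i hi
    have h3 := h2 i hi
    rw [h (2 * i) (by omega), h (2 * i + 1) (by omega), h (2 * i + 2) (by omega)] at h3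
    exact h3

lemma HNat_congr (n : ℕ) (f f' : ℕ → YoungDiagram) (h : ∀ m, m ≤ 2 * n → f m = f' m)
    (hf : HNat n f) : HNat n f' := by
  obtain ⟨h0, h1, h2⟩ := hf
  refine ⟨?_, ?_, ?_⟩
  · rw [← h 0 (by omega)]; exact h0
  · rw [← h (2 * n) le_rfl]; exact h1
  · intro i hi
    have h3 := h2 i hi
    rw [h (2 * i) (by omega), h (2 * i + 1) (by omega), h (2 * i + 2) (by omega)] at h3
    exact h3

/-! ### The forward and backward maps -/

noncomputable def fwdNat (f : ℕ → YoungDiagram) (m : ℕ) : YoungDiagram :=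
  if m % 2 = 0 then f (m + 1) else midYD (f m) (f (m + 1)) (f (m + 2))

noncomputable def bwdNat (n : ℕ) (g : ℕ → YoungDiagram) (m : ℕ) : YoungDiagram :=
  if m % 2 = 0 then
    (if m = 0 ∨ 2 * n ≤ m then ⊥ else midYD (g (m - 2)) (g (m - 1)) (g m))
  else g (m - 1)

lemma fwdNat_even (f : ℕ → YoungDiagram) (m : ℕ) : fwdNat f (2 * m) = f (2 * m + 1) := by
  unfold fwdNat; rw [if_pos (Nat.mul_mod_right 2 m)]

lemma fwdNat_odd (f : ℕ → YoungDiagram) (m : ℕ) :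
    fwdNat f (2 * m + 1) = midYD (f (2 * m + 1)) (f (2 * m + 2)) (f (2 * m + 3)) := by
  unfold fwdNat
  rw [if_neg (show ¬ (2 * m + 1) % 2 = 0 by omega)]

lemma bwdNat_odd (n : ℕ) (g : ℕ → YoungDiagram) (m : ℕ) :
    bwdNat n g (2 * m + 1) = g (2 * m) := by
  unfold bwdNat
  rw [if_neg (show ¬ (2 * m + 1) % 2 = 0 by omega)]
  rfl

lemma bwdNat_zero (n : ℕ) (g : ℕ → YoungDiagram) : bwdNat n g 0 = ⊥ := by
  unfold bwdNat
  rw [if_pos (by omega), if_pos (Or.inl rfl)]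

lemma bwdNat_top (n : ℕ) (g : ℕ → YoungDiagram) (m : ℕ) (h : 2 * n ≤ m) (hm : m % 2 = 0) :
    bwdNat n g m = ⊥ := by
  unfold bwdNat
  rw [if_pos hm, if_pos (Or.inr h)]

lemma bwdNat_mid (n : ℕ) (g : ℕ → YoungDiagram) (j : ℕ) (h : j + 1 < n) :
    bwdNat n g (2 * j + 2) = midYD (g (2 * j)) (g (2 * j + 1)) (g (2 * j + 2)) := by
  unfold bwdNat
  rw [if_pos (show (2 * j + 2) % 2 = 0 by omega), if_neg (by omega)]
  rfl

lemma fwdNat_cases (f : ℕ → YoungDiagram) (m : ℕ) :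
    fwdNat f m = f m ∨ fwdNat f m = f (m + 1) ∨ fwdNat f m = f (m + 2) := by
  unfold fwdNat midYD; split_ifs <;> tauto

lemma bwdNat_cases (n : ℕ) (g : ℕ → YoungDiagram) (m : ℕ) :
    bwdNat n g m = ⊥ ∨ bwdNat n g m = g (m - 2) ∨ bwdNat n g m = g (m - 1) ∨
      bwdNat n g m = g m := by
  unfold bwdNat midYD; split_ifs <;> tauto

lemma fwdNat_congr {f f' : ℕ → YoungDiagram} (m : ℕ) (h : ∀ i, i ≤ m + 2 → f i = f' i) :
    fwdNat f m = fwdNat f' m := by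
  unfold fwdNat
  rw [h m (by omega), h (m + 1) (by omega), h (m + 2) le_rfl]

lemma bwdNat_congr {n : ℕ} {g g' : ℕ → YoungDiagram} (m : ℕ)
    (h : ∀ i, i < 2 * n → g i = g' i) (hm : m ≤ 2 * n) :
    bwdNat n g m = bwdNat n g' m := by
  unfold bwdNat
  by_cases h1 : m % 2 = 0
  · rw [if_pos h1, if_pos h1]
    by_cases h2 : m = 0 ∨ 2 * n ≤ m
    · rw [if_pos h2, if_pos h2]
    · rw [if_neg h2, if_neg h2, h (m - 2) (by omega), h (m - 1) (by omega), h m (by omega)]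
  · rw [if_neg h1, if_neg h1, h (m - 1) (by omega)]

/-! ### Endpoint facts -/

lemma VNat_one (n : ℕ) (f : ℕ → YoungDiagram) (hn : 1 ≤ n) (hf : VNat n f) : f 1 = ⊥ := by
  obtain ⟨h0, hN, hs⟩ := hf
  rcases (hs 0 (by omega)).1 with h | h
  · simpa [h0] using h
  · rw [h0] at h; exact absurd h not_removeOneCell_bot

lemma VNat_pen (n : ℕ) (f : ℕ → YoungDiagram) (hn : 1 ≤ n) (hf : VNat n f) :
    f (2 * n - 1) = ⊥ := by
  obtain ⟨h0, hN, hs⟩ := hf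
  obtain ⟨p, rfl⟩ : ∃ p, n = p + 1 := ⟨n - 1, by omega⟩
  have hN' : f (2 * p + 2) = ⊥ := by rw [show 2 * p + 2 = 2 * (p + 1) by ring]; exact hN
  have key := (hs p (by omega)).2
  rw [show 2 * (p + 1) - 1 = 2 * p + 1 by omega]
  rcases key with h | h
  · rw [← h, hN']
  · rw [hN'] at h; exact absurd h not_addOneCell_bot

/-! ### The maps preserve the tableau conditions -/

lemma fwd_H (p : ℕ) (f : ℕ → YoungDiagram) (hf : VNat (p + 1) f) : HNat p (fwdNat f) := by
  have h1 : f 1 = ⊥ := VNat_one (p + 1) f (by omega) hf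
  have hpen : f (2 * p + 1) = ⊥ := by
    have := VNat_pen (p + 1) f (by omega) hf
    rwa [show 2 * (p + 1) - 1 = 2 * p + 1 by omega] at this
  obtain ⟨h0, hN, hs⟩ := hf
  refine ⟨?_, ?_, ?_⟩
  · have := fwdNat_even f 0
    simpa using this.trans (by simpa using h1)
  · rw [fwdNat_even f p]; exact hpen
  · intro i hi
    have hA := (hs i (by omega)).2
    have hR := (hs (i + 1) (by omega)).1
    rw [show 2 * (i + 1) + 1 = 2 * i + 3 by ring, show 2 * (i + 1) = 2 * i + 2 by ring] at hR
    have e0 : fwdNat f (2 * i) = f (2 * i + 1) := fwdNat_even f i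
    have e2 : fwdNat f (2 * i + 2) = f (2 * i + 3) := by
      have := fwdNat_even f (i + 1)
      rwa [show 2 * (i + 1) = 2 * i + 2 by ring, show 2 * i + 2 + 1 = 2 * i + 3 by ring] at this
    have e1 := fwdNat_odd f i
    rcases hA with hA | hA <;> rcases hR with hR | hR
    · -- (do nothing, do nothing)
      left
      rw [e1, midYD_eq1 hA, e0, e2]
      exact ⟨hR.trans hA, rfl⟩
    · -- (do nothing, remove): becomes (remove, do nothing)
      right; left
      rw [e1, midYD_eq1 hA, e0, e2]
      exact ⟨hA ▸ hR, rfl⟩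
    · -- (add, do nothing): becomes (do nothing, add)
      right; right; left
      rw [e1, midYD_eq2 (Ne.symm (addOneCell_ne hA)) hR.symm, e0, e2]
      exact ⟨rfl, hR ▸ hA⟩
    · -- (add, remove)
      right; right; right
      rw [e1, midYD_eq3 (Ne.symm (addOneCell_ne hA)) (removeOneCell_ne hR), e0, e2]
      exact ⟨hA, hR⟩

lemma bwd_V (p : ℕ) (g : ℕ → YoungDiagram) (hg : HNat p g) :
    VNat (p + 1) (bwdNat (p + 1) g) := by
  obtain ⟨g0, gN, gs⟩ := hg
  refine ⟨bwdNat_zero _ _, bwdNat_top _ _ _ le_rfl (by omega), ?_⟩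
  intro i hi
  constructor
  · -- R-step: bwdNat (2i) → bwdNat (2i+1)
    rcases Nat.eq_zero_or_pos i with rfl | hipos
    · left
      rw [show 2 * 0 + 1 = 2 * 0 + 1 from rfl, bwdNat_odd, show (2:ℕ) * 0 = 0 by ring,
        bwdNat_zero, g0]
    · obtain ⟨j, rfl⟩ : ∃ j, i = j + 1 := ⟨i - 1, by omega⟩
      have hj : j < p := by omega
      have eM : bwdNat (p + 1) g (2 * (j + 1)) = midYD (g (2 * j)) (g (2 * j + 1)) (g (2 * j + 2)) := by
        rw [show 2 * (j + 1) = 2 * j + 2 by ring]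
        exact bwdNat_mid (p + 1) g j (by omega)
      have eO : bwdNat (p + 1) g (2 * (j + 1) + 1) = g (2 * j + 2) := by
        rw [bwdNat_odd, show 2 * (j + 1) = 2 * j + 2 by ring]
      rcases gs j hj with ⟨hA, hB⟩ | ⟨hA, hB⟩ | ⟨hA, hB⟩ | ⟨hA, hB⟩
      · left; rw [eM, eO, midYD_eq1 hA]
      · right
        rw [eM, eO, midYD_eq2 (Ne.symm (removeOneCell_ne hA)) hB.symm]
        exact hB.symm ▸ hA
      · left; rw [eM, eO, midYD_eq1 hA]
      · right
        rw [eM, eO, midYD_eq3 (Ne.symm (addOneCell_ne hA)) (removeOneCell_ne hB)]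
        exact hB
  · -- A-step: bwdNat (2i+1) → bwdNat (2i+2)
    rcases Nat.lt_or_ge i p with hip | hip
    · have eM : bwdNat (p + 1) g (2 * i + 2) = midYD (g (2 * i)) (g (2 * i + 1)) (g (2 * i + 2)) :=
        bwdNat_mid (p + 1) g i (by omega)
      have eO : bwdNat (p + 1) g (2 * i + 1) = g (2 * i) := bwdNat_odd _ _ _
      rcases gs i hip with ⟨hA, hB⟩ | ⟨hA, hB⟩ | ⟨hA, hB⟩ | ⟨hA, hB⟩
      · left; rw [eM, eO, midYD_eq1 hA, hB, hA]
      · left; rw [eM, eO, midYD_eq2 (Ne.symm (removeOneCell_ne hA)) hB.symm]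
      · right
        rw [eM, eO, midYD_eq1 hA]
        exact hA.symm ▸ hB
      · right
        rw [eM, eO, midYD_eq3 (Ne.symm (addOneCell_ne hA)) (removeOneCell_ne hB)]
        exact hA
    · have hi' : i = p := by omega
      left
      have e2 : bwdNat (p + 1) g (2 * i + 2) = ⊥ :=
        bwdNat_top _ _ _ (by omega) (by omega)
      have eO : bwdNat (p + 1) g (2 * i + 1) = g (2 * i) := bwdNat_odd _ _ _
      rw [e2, eO, hi', gN]

/-! ### Round trips -/

lemma bwd_fwd (p : ℕ) (f : ℕ → YoungDiagram) (hf : VNat (p + 1) f) :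
    ∀ m, m ≤ 2 * (p + 1) → bwdNat (p + 1) (fwdNat f) m = f m := by
  obtain ⟨h0, hN, hs⟩ := hf
  intro m hm
  by_cases hpar : m % 2 = 0
  · by_cases hz : m = 0
    · subst hz; rw [bwdNat_zero, h0]
    · by_cases htop : 2 * (p + 1) ≤ m
      · rw [bwdNat_top _ _ _ htop hpar, show m = 2 * (p + 1) by omega, hN]
      · obtain ⟨i, hip, rfl⟩ : ∃ i, i < p ∧ m = 2 * i + 2 :=
          ⟨m / 2 - 1, by omega, by omega⟩
        have hA := (hs i (by omega)).2
        have hR := (hs (i + 1) (by omega)).1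
        rw [show 2 * (i + 1) + 1 = 2 * i + 3 by ring,
          show 2 * (i + 1) = 2 * i + 2 by ring] at hR
        have eM : bwdNat (p + 1) (fwdNat f) (2 * i + 2) =
            midYD (fwdNat f (2 * i)) (fwdNat f (2 * i + 1)) (fwdNat f (2 * i + 2)) :=
          bwdNat_mid (p + 1) (fwdNat f) i (by omega)
        have e0 : fwdNat f (2 * i) = f (2 * i + 1) := fwdNat_even f i
        have e2 : fwdNat f (2 * i + 2) = f (2 * i + 3) := by
          have := fwdNat_even f (i + 1)
          rwa [show 2 * (i + 1) = 2 * i + 2 by ring,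
            show 2 * i + 2 + 1 = 2 * i + 3 by ring] at this
        have e1 := fwdNat_odd f i
        rcases hA with hA | hA <;> rcases hR with hR | hR
        · rw [eM, e0, e2, e1, midYD_eq1 hA, midYD_eq1 (hR.trans hA), hR]
        · rw [eM, e0, e2, e1, midYD_eq1 hA,
            midYD_eq2 (fun hcon => removeOneCell_ne hR (hA.trans hcon.symm)) rfl, hA]
        · rw [eM, e0, e2, e1, midYD_eq2 (Ne.symm (addOneCell_ne hA)) hR.symm,
            midYD_eq1 rfl, hR]
        · rw [eM, e0, e2, e1,
            midYD_eq3 (Ne.symm (addOneCell_ne hA)) (removeOneCell_ne hR),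
            midYD_eq3 (Ne.symm (addOneCell_ne hA)) (removeOneCell_ne hR)]
  · obtain ⟨i, rfl⟩ : ∃ i, m = 2 * i + 1 := ⟨m / 2, by omega⟩
    rw [bwdNat_odd, fwdNat_even]

lemma fwd_bwd (p : ℕ) (g : ℕ → YoungDiagram) (hg : HNat p g) :
    ∀ m, m ≤ 2 * p → fwdNat (bwdNat (p + 1) g) m = g m := by
  obtain ⟨g0, gN, gs⟩ := hg
  intro m hm
  by_cases hpar : m % 2 = 0
  · obtain ⟨i, rfl⟩ : ∃ i, m = 2 * i := ⟨m / 2, by omega⟩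
    rw [fwdNat_even, bwdNat_odd]
  · obtain ⟨j, rfl⟩ : ∃ j, m = 2 * j + 1 := ⟨m / 2, by omega⟩
    have hj : j < p := by omega
    have eO : bwdNat (p + 1) g (2 * j + 1) = g (2 * j) := bwdNat_odd _ _ _
    have eM : bwdNat (p + 1) g (2 * j + 2) = midYD (g (2 * j)) (g (2 * j + 1)) (g (2 * j + 2)) :=
      bwdNat_mid (p + 1) g j (by omega)
    have eO3 : bwdNat (p + 1) g (2 * j + 3) = g (2 * j + 2) := by
      have := bwdNat_odd (p + 1) g (j + 1)
      rwa [show 2 * (j + 1) + 1 = 2 * j + 3 by ring, show 2 * (j + 1) = 2 * j + 2 by ring] at this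
    have e1 := fwdNat_odd (bwdNat (p + 1) g) j
    rw [show 2 * j + 2 = 2 * j + 1 + 1 by ring] at eM
    rw [show 2 * j + 3 = 2 * j + 1 + 2 by ring] at eO3
    rw [e1]
    rw [show 2 * j + 1 + 1 = 2 * j + 2 by ring] at eM ⊢
    rw [show 2 * j + 1 + 2 = 2 * j + 3 by ring] at eO3 ⊢
    rw [eO, eM, eO3]
    rcases gs j hj with ⟨hA, hB⟩ | ⟨hA, hB⟩ | ⟨hA, hB⟩ | ⟨hA, hB⟩
    · rw [midYD_eq1 hA, midYD_eq1 (hB.trans hA), hB]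
    · rw [midYD_eq2 (Ne.symm (removeOneCell_ne hA)) hB.symm, midYD_eq1 rfl, hB]
    · rw [midYD_eq1 hA,
        midYD_eq2 (fun hcon => addOneCell_ne hB (hA.trans hcon.symm)) rfl, hA]
    · rw [midYD_eq3 (Ne.symm (addOneCell_ne hA)) (removeOneCell_ne hB),
        midYD_eq3 (Ne.symm (addOneCell_ne hA)) (removeOneCell_ne hB)]

lemma extF_lt {N k : ℕ} {f : Fin N → YoungDiagram} (hf : FewerThanKRows k f) (hk : 0 < k)
    (m : ℕ) : ((extF f m).colLen 0) < k := by
  unfold extF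
  split
  · exact hf _
  · rw [colLen_bot]; exact hk

end Aux

noncomputable def mainEquiv (k p : ℕ) (hk : 0 < k) :
    {f : Fin (2 * (p + 1) + 1) → YoungDiagram //
        IsVacillatingTableau (p + 1) f ∧ FewerThanKRows k f} ≃
    {g : Fin (2 * p + 1) → YoungDiagram //
        IsHesitatingTableau p g ∧ FewerThanKRows k g} where
  toFun fh := ⟨fun j => fwdNat (extF fh.1) j.val, by
    have hV : VNat (p + 1) (extF fh.1) := (vac_iff _ fh.1).mp fh.2.1
    have hH : HNat p (fwdNat (extF fh.1)) := fwd_H p _ hV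
    refine (hes_iff p _).mpr (HNat_congr p _ _ ?_ hH)
    intro m hm
    exact (extF_eq (fun j : Fin (2 * p + 1) => fwdNat (extF fh.1) j.val)
      (show m < 2 * p + 1 by omega)).symm, by
    intro j
    show (fwdNat (extF fh.1) j.val).colLen 0 < k
    rcases fwdNat_cases (extF fh.1) j.val with h | h | h <;> rw [h] <;>
      exact extF_lt fh.2.2 hk _⟩
  invFun gh := ⟨fun j => bwdNat (p + 1) (extF gh.1) j.val, by
    have hH : HNat p (extF gh.1) := (hes_iff _ gh.1).mp gh.2.1
    have hV : VNat (p + 1) (bwdNat (p + 1) (extF gh.1)) := bwd_V p _ hH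
    refine (vac_iff _ _).mpr (VNat_congr (p + 1) _ _ ?_ hV)
    intro m hm
    exact (extF_eq (fun j : Fin (2 * (p + 1) + 1) => bwdNat (p + 1) (extF gh.1) j.val)
      (show m < 2 * (p + 1) + 1 by omega)).symm, by
    intro j
    show (bwdNat (p + 1) (extF gh.1) j.val).colLen 0 < k
    rcases bwdNat_cases (p + 1) (extF gh.1) j.val with h | h | h | h <;> rw [h]
    · rw [colLen_bot]; exact hk
    all_goals exact extF_lt gh.2.2 hk _⟩
  left_inv := by
    rintro ⟨f, hf, hfk⟩
    apply Subtype.ext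
    funext j
    show bwdNat (p + 1) (extF (fun j' : Fin (2 * p + 1) => fwdNat (extF f) j'.val)) j.val = f j
    have hV : VNat (p + 1) (extF f) := (vac_iff _ f).mp hf
    have hpen : extF f (2 * p + 1) = ⊥ := by
      have := VNat_pen (p + 1) (extF f) (by omega) hV
      rwa [show 2 * (p + 1) - 1 = 2 * p + 1 by omega] at this
    have hNN : extF f (2 * p + 2) = ⊥ := hV.2.1
    have hagree : ∀ i, i < 2 * (p + 1) →
        extF (fun j' : Fin (2 * p + 1) => fwdNat (extF f) j'.val) i = fwdNat (extF f) i := by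
      intro i hi
      by_cases hlt : i < 2 * p + 1
      · exact extF_eq _ hlt
      · have hieq : i = 2 * p + 1 := by omega
        subst hieq
        rw [extF_bot _ (by omega)]
        have := fwdNat_odd (extF f) p
        rw [this, midYD_eq1 (by rw [hNN, hpen]),
          extF_bot f (show ¬ 2 * p + 3 < 2 * (p + 1) + 1 by omega)]
    rw [bwdNat_congr j.val hagree (by have := j.isLt; omega),
      bwd_fwd p (extF f) hV j.val (by have := j.isLt; omega), extF_eq f j.isLt]
  right_inv := by
    rintro ⟨g, hg, hgk⟩
    apply Subtype.ext
    funext j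
    show fwdNat (extF (fun j' : Fin (2 * (p + 1) + 1) =>
        bwdNat (p + 1) (extF g) j'.val)) j.val = g j
    have hH : HNat p (extF g) := (hes_iff _ g).mp hg
    have hagree : ∀ i, i ≤ j.val + 2 →
        extF (fun j' : Fin (2 * (p + 1) + 1) => bwdNat (p + 1) (extF g) j'.val) i =
          bwdNat (p + 1) (extF g) i := by
      intro i hi
      exact extF_eq _ (show i < 2 * (p + 1) + 1 by have := j.isLt; omega)
    rw [fwdNat_congr j.val hagree,
      fwd_bwd p (extF g) hH j.val (by have := j.isLt; omega), extF_eq g j.isLt]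


/-- The number of vacillating tableaux of length `2n` with fewer than `k` rows equals the
number of hesitating tableaux of length `2(n-1)` with fewer than `k` rows. -/
theorem card_vacillating_eq_card_hesitating (k n : ℕ) (hk : 3 ≤ k) (hn : 1 ≤ n) :
    Nat.card {f : Fin (2 * n + 1) → YoungDiagram //
        IsVacillatingTableau n f ∧ FewerThanKRows k f} =
    Nat.card {g : Fin (2 * (n - 1) + 1) → YoungDiagram //
        IsHesitatingTableau (n - 1) g ∧ FewerThanKRows k g} := by
  obtain ⟨p, rfl⟩ : ∃ p, n = p + 1 := ⟨n - 1, by omega⟩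
  exact Nat.card_congr (mainEquiv k p (by omega))
end

section
/- Let R = ℚ[x, x⁻¹] be the ring of Laurent polynomials over ℚ and let Y ∈ R[[u]] be the unique formal power series with constant term 0 satisfying Y = u·(1 + x⁻¹)·(x + Y)·(1 + Y). Then for all integers k ≥ 1, n ≥ 0 and m ∈ ℤ, the coefficient of x^m in the coefficient of u^{n+1} of Y^k equals (k/(n+1)) · Σ_{s=0}^{n+1} C(n+1,s)·C(n+1,k+s)·C(n+1,s+m), where C(a,b) denotes the binomial coefficient with the convention C(a,b) = 0 unless 0 ≤ b ≤ a. -/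
open PowerSeries LaurentPolynomial

/-- Binomial coefficient `C(a,b)` for integers, with the convention that it vanishes
unless `0 ≤ b ≤ a`. -/
def intChoose (a b : ℤ) : ℕ :=
  if 0 ≤ b ∧ b ≤ a then a.toNat.choose b.toNat else 0


open PowerSeries LaurentPolynomial

noncomputable section

abbrev L : Type := LaurentPolynomial ℚ
abbrev L2 : Type := LaurentPolynomial L

/-- The operator `y d/dy` on Laurent polynomials in `y` over `L`. -/
noncomputable def theta (F : L2) : L2 :=
  F.coeff.sum fun j a => AddMonoidAlgebra.single j ((j : ℚ) • a)

lemma theta_single (j : ℤ) (a : L) :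
    theta (AddMonoidAlgebra.single j a) = (j : ℚ) • AddMonoidAlgebra.single j a := by
  rw [theta, AddMonoidAlgebra.coeff_single, Finsupp.sum_single_index (by simp), AddMonoidAlgebra.smul_single]

lemma theta_add (F G : L2) : theta (F + G) = theta F + theta G := by
  unfold theta
  rw [AddMonoidAlgebra.coeff_add]
  exact Finsupp.sum_add_index (by simp) (by intros; rw [smul_add, AddMonoidAlgebra.single_add])

lemma theta_zero : theta 0 = 0 := by simp [theta]

lemma theta_apply (F : L2) (k : ℤ) : (theta F).coeff k = (k : ℚ) • F.coeff k := by
  induction F using AddMonoidAlgebra.induction_linear with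
  | zero => rw [theta_zero]; simp
  | add f g hf hg =>
      rw [theta_add, AddMonoidAlgebra.coeff_add, AddMonoidAlgebra.coeff_add, Finsupp.add_apply, Finsupp.add_apply, hf, hg, smul_add]
  | single j a =>
      rw [theta_single, AddMonoidAlgebra.coeff_smul_apply, AddMonoidAlgebra.coeff_single]
      rcases eq_or_ne j k with rfl | h
      · simp
      · rw [Finsupp.single_eq_of_ne' h]; simp

lemma theta_mul (F G : L2) : theta (F * G) = theta F * G + F * theta G := by
  induction F using AddMonoidAlgebra.induction_linear with
  | zero => rw [theta_zero]; simp [theta_zero]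
  | add f g hf hg =>
      rw [add_mul, theta_add, hf, hg, theta_add, add_mul]; ring
  | single j a =>
    induction G using AddMonoidAlgebra.induction_linear with
    | zero => rw [theta_zero]; simp [theta_zero]
    | add f g hf hg =>
        rw [mul_add, theta_add, hf, hg, theta_add, mul_add]; ring
    | single i b =>
        rw [AddMonoidAlgebra.single_mul_single, theta_single, theta_single, theta_single,
          smul_mul_assoc, mul_smul_comm, AddMonoidAlgebra.single_mul_single, ← add_smul]
        push_cast
        ring_nf

lemma theta_pow (Q : L2) (N : ℕ) :
    theta (Q ^ (N + 1)) = (N + 1 : ℚ) • (Q ^ N * theta Q) := by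
  induction N with
  | zero => simp [theta_mul]
  | succ M ih =>
      rw [pow_succ, theta_mul, ih, pow_succ, smul_mul_assoc,
        mul_assoc, mul_comm (theta Q) Q, ← mul_assoc]
      push_cast
      conv_rhs => rw [add_smul, one_smul]

lemma key_identity (Q : L2) (N : ℕ) :
    (N + 1 : ℚ) • theta (Q ^ (N + 2)) = (N + 2 : ℚ) • (Q * theta (Q ^ (N + 1))) := by
  rw [theta_pow, theta_pow, smul_smul, mul_smul_comm, smul_smul]
  rw [pow_succ, mul_comm (Q ^ N) Q, mul_assoc]
  congr 1
  push_cast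
  ring

-- coefficient extraction lemmas in L2
lemma CT_mul_apply (a : L) (n : ℤ) (F : L2) (k : ℤ) :
    ((LaurentPolynomial.C a * T n * F : L2)).coeff k = a * F.coeff (k - n) := by
  rw [← single_eq_C_mul_T, AddMonoidAlgebra.coeff_single_mul_apply]
  ring_nf

lemma C_mul_apply (a : L) (F : L2) (k : ℤ) :
    ((LaurentPolynomial.C a * F : L2)).coeff k = a * F.coeff k := by
  have := CT_mul_apply a 0 F k
  rw [T_zero, mul_one] at this
  rw [this, sub_zero]

lemma mul_CT_apply (F : L2) (a : L) (n : ℤ) (k : ℤ) :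
    ((F * (LaurentPolynomial.C a * T n) : L2)).coeff k = F.coeff (k - n) * a := by
  rw [← single_eq_C_mul_T, AddMonoidAlgebra.coeff_mul_single_apply, sub_eq_add_neg]

/-- `Q = (1+x)(1+y)(1+x⁻¹y⁻¹)` as a Laurent polynomial in `y` over `L = ℚ[x,x⁻¹]`. -/
noncomputable def QQ : L2 :=
  (1 + LaurentPolynomial.C (T 1)) * (1 + T 1) *
    (1 + LaurentPolynomial.C (T (-1)) * T (-1))

lemma T_neg_one_mul_T_one : (T (-1) * T 1 : L) = 1 := by
  rw [← T_add]; norm_num [T_zero]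

lemma QQ_expand : QQ =
    LaurentPolynomial.C ((1 + T (-1)) * (1 + T 1)) +
      LaurentPolynomial.C (1 + T 1) * T 1 +
      LaurentPolynomial.C (1 + T (-1)) * T (-1) := by
  unfold QQ
  have hx : (LaurentPolynomial.C (T 1) * LaurentPolynomial.C (T (-1)) : L2) = 1 := by
    rw [← map_mul, ← T_add]; norm_num [T_zero, map_one]
  have hy : (T 1 * T (-1) : L2) = 1 := by rw [← T_add]; norm_num [T_zero]
  simp only [map_add, map_mul, map_one]
  linear_combination (T (-1) : L2) * hx +
    (LaurentPolynomial.C (T (-1)) + LaurentPolynomial.C (T 1) * LaurentPolynomial.C (T (-1)) : L2) * hy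
section
variable (Y : PowerSeries L)
    (hY0 : PowerSeries.constantCoeff Y = 0)
    (hY : Y = PowerSeries.X * PowerSeries.C (1 + T (-1)) *
        (PowerSeries.C (T 1) + Y) * (1 + Y))

include hY in
lemma Y_eq_X_mul : Y = PowerSeries.X *
    (PowerSeries.C (1 + T (-1)) * (PowerSeries.C (T 1) + Y) * (1 + Y)) := by
  nth_rewrite 1 [hY]; ring

include hY0 hY in
lemma coeff_one_Y : PowerSeries.coeff 1 Y = 1 + T 1 := by
  rw [Y_eq_X_mul Y hY]
  rw [show (1 : ℕ) = 0 + 1 by rfl, PowerSeries.coeff_succ_X_mul,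
    PowerSeries.coeff_zero_eq_constantCoeff]
  simp only [map_mul, map_add, map_one, hY0, PowerSeries.constantCoeff_C, add_zero, mul_one]
  rw [add_mul, one_mul, ← T_add]
  norm_num [T_zero]
  ring

omit hY0 in
include hY in
lemma coeff_one_Y_pow (k : ℕ) : PowerSeries.coeff 1 (Y ^ (k + 2)) = 0 := by
  have h : Y ^ (k + 2) = PowerSeries.X * (PowerSeries.X * ((PowerSeries.C (1 + T (-1)) *
      (PowerSeries.C (T 1) + Y) * (1 + Y)) ^ (k + 2) * PowerSeries.X ^ k)) := by
    nth_rewrite 1 [Y_eq_X_mul Y hY]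
    rw [mul_pow]
    ring
  rw [h, show (1 : ℕ) = 0 + 1 by rfl, PowerSeries.coeff_succ_X_mul,
    PowerSeries.coeff_zero_eq_constantCoeff, map_mul, PowerSeries.constantCoeff_X, zero_mul]

omit hY0 in
include hY in
lemma rec_step (k N : ℕ) :
    PowerSeries.coeff (N + 1) (Y ^ (k + 1)) =
      (1 + T 1) * PowerSeries.coeff N (Y ^ k) +
        ((1 + T (-1)) * (1 + T 1)) * PowerSeries.coeff N (Y ^ (k + 1)) +
        (1 + T (-1)) * PowerSeries.coeff N (Y ^ (k + 2)) := by
  have hat : (PowerSeries.C (T (-1)) * PowerSeries.C (T 1) : PowerSeries L) = 1 := by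
    rw [← map_mul, ← T_add]; norm_num [T_zero, map_one]
  have h : Y ^ (k + 1) = PowerSeries.X *
      (PowerSeries.C (1 + T 1) * Y ^ k +
       PowerSeries.C ((1 + T (-1)) * (1 + T 1)) * Y ^ (k + 1) +
       PowerSeries.C (1 + T (-1)) * Y ^ (k + 2)) := by
    nth_rewrite 1 [pow_succ']
    nth_rewrite 1 [Y_eq_X_mul Y hY]
    rw [mul_assoc]
    refine congrArg (PowerSeries.X * ·) ?_
    simp only [map_mul, map_add, map_one]
    linear_combination (Y ^ k : PowerSeries L) * hat
  nth_rewrite 1 [h]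
  rw [PowerSeries.coeff_succ_X_mul, map_add, map_add, PowerSeries.coeff_C_mul,
    PowerSeries.coeff_C_mul, PowerSeries.coeff_C_mul]

end
lemma CT_apply (a : L) (n j : ℤ) :
    ((LaurentPolynomial.C a * T n : L2)).coeff j = if n = j then a else 0 := by
  rw [← single_eq_C_mul_T, AddMonoidAlgebra.coeff_single]; exact Finsupp.single_apply

lemma QQ_mul_apply (H : L2) (k : ℤ) :
    ((QQ * H : L2)).coeff k = ((1 + T (-1)) * (1 + T 1)) * H.coeff k +
      (1 + T 1) * H.coeff (k - 1) + (1 + T (-1)) * H.coeff (k + 1) := by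
  rw [QQ_expand, add_mul, add_mul, AddMonoidAlgebra.coeff_add, AddMonoidAlgebra.coeff_add, Finsupp.add_apply, Finsupp.add_apply,
    C_mul_apply, CT_mul_apply, CT_mul_apply, sub_neg_eq_add]

lemma QQ_apply_big (j : ℤ) (h1 : j ≠ 1) (h0 : j ≠ 0) (hm : j ≠ -1) : QQ.coeff j = 0 := by
  rw [QQ_expand, AddMonoidAlgebra.coeff_add, AddMonoidAlgebra.coeff_add, Finsupp.add_apply, Finsupp.add_apply, CT_apply, CT_apply,
    LaurentPolynomial.C_apply]
  rw [if_neg h0, if_neg (by omega), if_neg (by omega)]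
  simp

lemma QQ_apply_one : QQ.coeff 1 = 1 + T 1 := by
  rw [QQ_expand, AddMonoidAlgebra.coeff_add, AddMonoidAlgebra.coeff_add, Finsupp.add_apply, Finsupp.add_apply, CT_apply, CT_apply,
    LaurentPolynomial.C_apply]
  norm_num

section
variable (Y : PowerSeries L)
    (hY0 : PowerSeries.constantCoeff Y = 0)
    (hY : Y = PowerSeries.X * PowerSeries.C (1 + T (-1)) *
        (PowerSeries.C (T 1) + Y) * (1 + Y))

include hY0 hY in
lemma main_induction (N : ℕ) : ∀ k : ℕ,
    ((N : ℚ) + 1) • PowerSeries.coeff (N + 1) (Y ^ k) =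
      (k : ℚ) • ((QQ ^ (N + 1) : L2).coeff (k : ℤ)) := by
  induction N with
  | zero =>
      intro k
      match k with
      | 0 => simp [PowerSeries.coeff_one]
      | 1 =>
          rw [pow_one, pow_one, coeff_one_Y Y hY0 hY]
          norm_num [QQ_apply_one]
      | (j+2) =>
          rw [coeff_one_Y_pow Y hY, pow_one, smul_zero,
            QQ_apply_big (j+2 : ℕ) (by omega) (by omega) (by omega), smul_zero]
  | succ N ih =>
      intro k
      match k with
      | 0 =>
          rw [pow_zero, PowerSeries.coeff_one, if_neg (by omega)]
          simp
      | (j+1) =>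
          have hQt : ∀ k : ℤ, ((QQ * theta (QQ ^ (N+1)) : L2)).coeff k =
              ((1 + T (-1)) * (1 + T 1)) * ((k : ℚ) • (QQ ^ (N+1) : L2).coeff k) +
              (1 + T 1) * (((k - 1 : ℤ) : ℚ) • (QQ ^ (N+1) : L2).coeff (k - 1)) +
              (1 + T (-1)) * (((k + 1 : ℤ) : ℚ) • (QQ ^ (N+1) : L2).coeff (k + 1)) := by
            intro k
            rw [QQ_mul_apply, theta_apply, theta_apply, theta_apply]
          have hkey : ∀ k : ℤ, ((N : ℚ) + 1) • ((k : ℚ) • (QQ ^ (N+2) : L2).coeff k) =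
              ((N : ℚ) + 2) • ((QQ * theta (QQ ^ (N+1)) : L2)).coeff k := by
            intro k
            have h := congrArg (fun F : L2 => F.coeff k) (key_identity QQ N)
            rw [AddMonoidAlgebra.coeff_smul_apply, AddMonoidAlgebra.coeff_smul_apply, theta_apply] at h
            exact h
          have h1 : ((N : ℚ) + 1) • PowerSeries.coeff (N + 2) (Y ^ (j + 1)) =
              ((QQ * theta (QQ ^ (N+1)) : L2)).coeff ((j : ℤ) + 1) := by
            rw [show (N + 2 : ℕ) = (N + 1) + 1 from rfl, rec_step Y hY j (N+1),
              smul_add, smul_add, ← mul_smul_comm, ← mul_smul_comm,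
              ← mul_smul_comm, ih j, ih (j+1), ih (j+2), hQt ((j : ℤ) + 1)]
            simp only [Algebra.smul_def]
            push_cast
            simp only [map_ofNat]
            ring_nf
          apply smul_right_injective L (show ((N : ℚ) + 1) ≠ 0 by positivity)
          show ((N : ℚ) + 1) • ((((N+1 : ℕ) : ℚ) + 1) • PowerSeries.coeff (N+2) (Y ^ (j+1)))
            = ((N : ℚ) + 1) • (((j+1 : ℕ) : ℚ) • (QQ ^ (N+2) : L2).coeff (((j+1 : ℕ) : ℤ)))
          rw [smul_comm, h1]
          have hk := (hkey ((j : ℤ) + 1)).symm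
          push_cast at hk ⊢
          rw [show ((N:ℚ) + 1 + 1) = (N:ℚ) + 2 by ring]
          exact hk
end

lemma intChoose_natCast (N j : ℕ) : intChoose (N : ℤ) (j : ℤ) = N.choose j := by
  unfold intChoose
  split
  · simp
  · next h =>
    have : N < j := by omega
    exact (Nat.choose_eq_zero_of_lt this).symm

lemma CT_apply' {R : Type*} [CommSemiring R] (a : R) (n j : ℤ) :
    ((LaurentPolynomial.C a * T n : LaurentPolynomial R)).coeff j = if n = j then a else 0 := by
  rw [← single_eq_C_mul_T, AddMonoidAlgebra.coeff_single]; exact Finsupp.single_apply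

lemma onePlusT_pow {R : Type*} [CommRing R] (N : ℕ) :
    ((1 + T 1 : LaurentPolynomial R)) ^ N =
      ∑ a ∈ Finset.range (N + 1),
        LaurentPolynomial.C ((N.choose a : R)) * T (a : ℤ) := by
  rw [add_comm, add_pow]
  apply Finset.sum_congr rfl
  intro a _
  rw [one_pow, mul_one, T_pow, mul_one, T_mul, ← map_natCast (LaurentPolynomial.C (R := R))]

lemma coeff_onePlusT_pow (N : ℕ) (j : ℤ) :
    ((1 + T 1 : L) ^ N).coeff j = (intChoose (N : ℤ) j : ℚ) := by
  rw [onePlusT_pow, AddMonoidAlgebra.coeff_sum, Finsupp.finset_sum_apply]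
  have hterm : ∀ a ∈ Finset.range (N + 1),
      ((LaurentPolynomial.C ((N.choose a : ℚ)) * T (a : ℤ) : L)).coeff j =
        if a = j.toNat ∧ 0 ≤ j then (N.choose a : ℚ) else 0 := by
    intro a _
    rw [CT_apply']
    congr 1
    simp only [eq_iff_iff]
    omega
  rw [Finset.sum_congr rfl hterm]
  by_cases hj : 0 ≤ j ∧ j ≤ (N : ℤ)
  · have hmem : j.toNat ∈ Finset.range (N + 1) := by
      rw [Finset.mem_range]; omega
    have h0 : 0 ≤ j := hj.1
    simp only [h0, and_true]
    rw [Finset.sum_ite_eq' (Finset.range (N+1)) j.toNat, if_pos hmem]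
    unfold intChoose
    rw [if_pos hj]
    simp
  · rw [Finset.sum_eq_zero, eq_comm]
    · norm_num [intChoose, hj]
    · intro x hx
      rw [Finset.mem_range] at hx
      rw [if_neg]
      omega

lemma C_mul_apply' {R : Type*} [CommSemiring R] (a : R) (F : LaurentPolynomial R) (j : ℤ) :
    ((LaurentPolynomial.C a * F : LaurentPolynomial R)).coeff j = a * F.coeff j := by
  rw [← single_eq_C, AddMonoidAlgebra.coeff_single_mul_apply]
  norm_num

lemma mul_T_apply {R : Type*} [CommSemiring R] (F : LaurentPolynomial R) (n j : ℤ) :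
    ((F * T n : LaurentPolynomial R)).coeff j = F.coeff (j - n) := by
  rw [T, AddMonoidAlgebra.coeff_mul_single_apply, mul_one, sub_eq_add_neg]

lemma third_pow (N : ℕ) :
    ((1 + LaurentPolynomial.C (T (-1)) * T (-1) : L2)) ^ N =
      ∑ s ∈ Finset.range (N + 1),
        LaurentPolynomial.C ((N.choose s : L) * T (-(s : ℤ))) * T (-(s : ℤ)) := by
  rw [add_comm, add_pow]
  apply Finset.sum_congr rfl
  intro s _
  rw [one_pow, mul_one, mul_pow, ← map_pow, T_pow, T_pow, map_mul,
    ← map_natCast (LaurentPolynomial.C (R := L)),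
    show ((s : ℤ) * -1) = -(s : ℤ) by ring]
  ring

lemma QQ_pow_apply (N k : ℕ) (m : ℤ) :
    (((QQ ^ N : L2)).coeff ((k : ℤ))).coeff m =
      ∑ s ∈ Finset.range (N + 1),
        (N.choose s : ℚ) * (N.choose (k + s) : ℚ) * (intChoose (N : ℤ) ((s : ℤ) + m) : ℚ) := by
  have hQ : (QQ ^ N : L2) =
      LaurentPolynomial.C ((1 + T 1 : L) ^ N) * ((1 + T 1 : L2) ^ N) *
        ((1 + LaurentPolynomial.C (T (-1)) * T (-1) : L2) ^ N) := by
    rw [QQ, mul_pow, mul_pow, map_pow, map_add, map_one]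
  rw [hQ, onePlusT_pow (R := L), third_pow]
  simp only [Finset.mul_sum, Finset.sum_mul]
  rw [AddMonoidAlgebra.coeff_sum, Finsupp.finset_sum_apply, AddMonoidAlgebra.coeff_sum, Finsupp.finset_sum_apply]
  apply Finset.sum_congr rfl
  intro s hs
  rw [AddMonoidAlgebra.coeff_sum, Finsupp.finset_sum_apply, AddMonoidAlgebra.coeff_sum, Finsupp.finset_sum_apply]
  have hterm : ∀ a ∈ Finset.range (N + 1),
      (((LaurentPolynomial.C ((1 + T 1 : L) ^ N) * (LaurentPolynomial.C ((N.choose a : L)) * T (a : ℤ)) *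
        (LaurentPolynomial.C ((N.choose s : L) * T (-(s : ℤ))) * T (-(s : ℤ))) : L2)).coeff ((k : ℤ))).coeff m =
      if a = k + s then (N.choose a : ℚ) * (N.choose s : ℚ) *
        (((1 + T 1 : L) ^ N).coeff (m + (s : ℤ))) else 0 := by
    intro a _
    have hprod : (LaurentPolynomial.C ((1 + T 1 : L) ^ N) * (LaurentPolynomial.C ((N.choose a : L)) * T (a : ℤ)) *
        (LaurentPolynomial.C ((N.choose s : L) * T (-(s : ℤ))) * T (-(s : ℤ))) : L2) =
        LaurentPolynomial.C ((N.choose a : L) * ((N.choose s : L) * ((1 + T 1 : L) ^ N * T (-(s : ℤ))))) *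
          T ((a : ℤ) - (s : ℤ)) := by
      rw [map_mul, map_mul, map_mul, map_mul, T_sub]
      ring
    rw [hprod, CT_apply', apply_ite (fun p : L => p.coeff m), AddMonoidAlgebra.coeff_zero, Finsupp.zero_apply]
    by_cases hc : a = k + s
    · rw [if_pos (by omega : (a : ℤ) - (s : ℤ) = (k : ℤ)), if_pos hc,
        show ((N.choose a : L)) = LaurentPolynomial.C ((N.choose a : ℚ)) by rw [map_natCast],
        show ((N.choose s : L)) = LaurentPolynomial.C ((N.choose s : ℚ)) by rw [map_natCast],
        C_mul_apply', C_mul_apply', mul_T_apply, sub_neg_eq_add, ← mul_assoc]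
    · rw [if_neg (by omega), if_neg hc]
  rw [Finset.sum_congr rfl hterm]
  rw [Finset.sum_ite_eq' (Finset.range (N + 1)) (k + s)]
  rw [coeff_onePlusT_pow, show (m + (s : ℤ)) = ((s : ℤ) + m) by ring]
  by_cases hmem : k + s ∈ Finset.range (N + 1)
  · rw [if_pos hmem]; ring
  · rw [if_neg hmem]
    rw [Finset.mem_range, not_lt] at hmem
    rw [Nat.choose_eq_zero_of_lt (by omega : N < k + s)]
    norm_num

/-- If `Y ∈ ℚ[x,x⁻¹][[u]]` has constant term `0` and satisfies
`Y = u (1 + x⁻¹)(x + Y)(1 + Y)`, then for all `k ≥ 1`, `n ≥ 0` and `m ∈ ℤ` the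
coefficient of `x^m` in the coefficient of `u^{n+1}` of `Y^k` is
`(k/(n+1)) Σ_{s=0}^{n+1} C(n+1,s) C(n+1,k+s) C(n+1,s+m)`. -/
theorem laurent_kernel_coeff (Y : PowerSeries (LaurentPolynomial ℚ))
    (hY0 : PowerSeries.constantCoeff Y = 0)
    (hY : Y = PowerSeries.X * PowerSeries.C (1 + T (-1)) *
        (PowerSeries.C (T 1) + Y) * (1 + Y)) :
    ∀ (k : ℕ), 1 ≤ k → ∀ (n : ℕ) (m : ℤ),
      AddMonoidAlgebra.coeff (PowerSeries.coeff (n + 1) (Y ^ k)) m =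
        (k : ℚ) / ((n : ℚ) + 1) *
          ∑ s ∈ Finset.range (n + 2),
            (intChoose ((n : ℤ) + 1) (s : ℤ) : ℚ) *
              (intChoose ((n : ℤ) + 1) ((k : ℤ) + (s : ℤ)) : ℚ) *
              (intChoose ((n : ℤ) + 1) ((s : ℤ) + m) : ℚ) := by
  intro k hk n m
  have h := main_induction Y hY0 hY n k
  have h2 := congrArg (fun p : L => p.coeff m) h
  rw [AddMonoidAlgebra.coeff_smul_apply, AddMonoidAlgebra.coeff_smul_apply, smul_eq_mul, smul_eq_mul,
    QQ_pow_apply (n+1) k m] at h2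
  have hne : ((n : ℚ) + 1) ≠ 0 := by positivity
  have hsum : ∑ s ∈ Finset.range (n + 2),
        (intChoose ((n : ℤ) + 1) (s : ℤ) : ℚ) *
          (intChoose ((n : ℤ) + 1) ((k : ℤ) + (s : ℤ)) : ℚ) *
          (intChoose ((n : ℤ) + 1) ((s : ℤ) + m) : ℚ)
      = ∑ s ∈ Finset.range ((n + 1) + 1),
        ((n+1).choose s : ℚ) * ((n+1).choose (k + s) : ℚ) *
          (intChoose (((n+1 : ℕ)) : ℤ) ((s : ℤ) + m) : ℚ) := by
    apply Finset.sum_congr rfl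
    intro s hs
    have e1 : intChoose ((n : ℤ) + 1) (s : ℤ) = (n+1).choose s := by
      rw [show ((n : ℤ) + 1) = ((n + 1 : ℕ) : ℤ) by push_cast; ring, intChoose_natCast]
    have e2 : intChoose ((n : ℤ) + 1) ((k : ℤ) + (s : ℤ)) = (n+1).choose (k + s) := by
      rw [show ((n : ℤ) + 1) = ((n + 1 : ℕ) : ℤ) by push_cast; ring,
        show ((k : ℤ) + (s : ℤ)) = ((k + s : ℕ) : ℤ) by push_cast; ring, intChoose_natCast]
    rw [e1, e2, show ((n : ℤ) + 1) = ((n + 1 : ℕ) : ℤ) by push_cast; ring]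
  rw [hsum, div_mul_eq_mul_div, eq_div_iff hne]
  push_cast at h2 ⊢
  linear_combination h2
end
end
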